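/- arXiv:2006.10798 — 8 statements merged into one kernel-verified Lean document; each statement's English description precedes it below -/
import Mathlib

section
/- For all positive real numbers a and b, the improper integral ∫₀^∞ x^{-3/2} exp(-b²/(a x)) dx equals √(πa)/b. -/
open MeasureTheory Real Set

theorem stmt_0 (a b : ℝ) (ha : 0 < a) (hb : 0 < b) :
    ∫ x in Set.Ioi (0 : ℝ), x ^ (-(3 : ℝ)/2) * Real.exp (-b^2 / (a * x)) =
      Real.sqrt (π * a) / b := by
  have key := integral_comp_rpow_Ioi
    (fun x : ℝ => x ^ (-(3 : ℝ)/2) * Real.exp (-b^2 / (a * x))) (p := -2) (by norm_num)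
  rw [← key]
  have congr1 : ∀ x ∈ Ioi (0:ℝ),
      (|(-2 : ℝ)| * x ^ ((-2:ℝ) - 1)) •
        ((fun x : ℝ => x ^ (-(3 : ℝ)/2) * Real.exp (-b^2 / (a * x))) (x ^ (-2:ℝ)))
      = 2 * Real.exp (-(b^2/a) * x ^ 2) := by
    intro x hx
    have hx0 : (0:ℝ) < x := hx
    have hxne : x ≠ 0 := hx0.ne'
    have h1 : (x ^ (-2:ℝ)) ^ (-(3 : ℝ)/2) = x ^ (3:ℝ) := by
      rw [← Real.rpow_mul hx0.le]; norm_num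
    have h2 : x ^ (-2:ℝ) = (x ^ 2)⁻¹ := by
      rw [Real.rpow_neg hx0.le, Real.rpow_two]
    have hexp : -b^2 / (a * x ^ (-2:ℝ)) = -(b^2/a) * x ^ 2 := by
      rw [h2]; field_simp
    have h4 : x ^ ((-2:ℝ) - 1) = (x ^ (3:ℝ))⁻¹ := by
      rw [show ((-2:ℝ) - 1) = -(3:ℝ) by norm_num, Real.rpow_neg hx0.le]
    have h5 : x ^ (3:ℝ) ≠ 0 := by positivity
    simp only [smul_eq_mul, h1, hexp, h4, abs_neg, abs_two]
    field_simp
  rw [setIntegral_congr_fun (by measurability) congr1]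
  rw [integral_const_mul, integral_gaussian_Ioi]
  rw [show π / (b^2/a) = π * a / b^2 by field_simp]
  rw [Real.sqrt_div (by positivity), Real.sqrt_sq hb.le]
  ring
end

section
/- Let k be a natural number and let ρ, t > 0 be real. If a ≥ ρt/2, then there exist positive constants c, C (depending only on k) with c · t^{1/2}((a − ρt/2)^k + t^{k/2}) e^{ρ²t/4 − aρ} ≤ ∫₀^∞ x^k e^{-(x−a)²/t − ρx} dx ≤ C · t^{1/2}((a − ρt/2)^k + t^{k/2}) e^{ρ²t/4 − aρ}. -/
open MeasureTheory Real Set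

noncomputable def Mker (k : ℕ) : ℝ := ∫ x : ℝ, |x| ^ k * Real.exp (-x ^ 2)

lemma Mker_nonneg (k : ℕ) : 0 ≤ Mker k :=
  integral_nonneg fun x => by positivity

lemma integrable_pow_gauss (t : ℝ) (ht : 0 < t) (i : ℕ) :
    Integrable (fun x : ℝ => x ^ i * Real.exp (-x ^ 2 / t)) := by
  have h := integrable_rpow_mul_exp_neg_mul_sq (b := 1 / t) (by positivity)
    (s := (i : ℝ)) (lt_of_lt_of_le neg_one_lt_zero (Nat.cast_nonneg i))
  refine h.congr (Filter.Eventually.of_forall fun x => ?_)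
  show x ^ ((i:ℝ)) * Real.exp (-(1 / t) * x ^ 2) = x ^ i * Real.exp (-x ^ 2 / t)
  rw [rpow_natCast, show -(1 / t) * x ^ 2 = -x ^ 2 / t by ring]

lemma integrable_abs_pow_gauss (t : ℝ) (ht : 0 < t) (i : ℕ) :
    Integrable (fun x : ℝ => |x| ^ i * Real.exp (-x ^ 2 / t)) := by
  refine (integrable_pow_gauss t ht i).abs.congr (Filter.Eventually.of_forall fun x => ?_)
  show |x ^ i * Real.exp (-x ^ 2 / t)| = |x| ^ i * Real.exp (-x ^ 2 / t)
  rw [abs_mul, abs_pow, abs_of_pos (exp_pos _)]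

lemma integrable_shift (t β : ℝ) (ht : 0 < t) (k : ℕ) :
    Integrable (fun x : ℝ => x ^ k * Real.exp (-(x - β) ^ 2 / t)) := by
  have h : Integrable (fun u : ℝ => (u + β) ^ k * Real.exp (-u ^ 2 / t)) := by
    have heq : (fun u : ℝ => (u + β) ^ k * Real.exp (-u ^ 2 / t)) =
        fun u => ∑ i ∈ Finset.range (k + 1),
          (β ^ (k - i) * (k.choose i : ℝ)) * (u ^ i * Real.exp (-u ^ 2 / t)) := by
      funext u
      rw [add_pow, Finset.sum_mul]
      exact Finset.sum_congr rfl fun i _ => by ring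
    rw [heq]
    exact integrable_finset_sum _ fun i _ => (integrable_pow_gauss t ht i).const_mul _
  refine (h.comp_sub_right β).congr (Filter.Eventually.of_forall fun x => ?_)
  simp [sub_add_cancel]

lemma integrable_abs_shift (t β : ℝ) (ht : 0 < t) (k : ℕ) :
    Integrable (fun x : ℝ => |x - β| ^ k * Real.exp (-(x - β) ^ 2 / t)) :=
  (integrable_abs_pow_gauss t ht k).comp_sub_right β

lemma gauss_total (t β : ℝ) (ht : 0 < t) :
    ∫ x : ℝ, Real.exp (-(x - β) ^ 2 / t) = Real.sqrt π * Real.sqrt t := by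
  rw [integral_sub_right_eq_self (fun u : ℝ => Real.exp (-u ^ 2 / t)) β]
  have h : (fun x : ℝ => Real.exp (-x ^ 2 / t)) = fun x => Real.exp (-(1 / t) * x ^ 2) := by
    funext x; rw [show -(1 / t) * x ^ 2 = -x ^ 2 / t by ring]
  rw [h, integral_gaussian, show π / (1 / t) = π * t by field_simp, Real.sqrt_mul pi_pos.le]

lemma gauss_abs_moment (t : ℝ) (ht : 0 < t) (k : ℕ) :
    ∫ x : ℝ, |x| ^ k * Real.exp (-x ^ 2 / t)
      = Real.sqrt t * (Real.sqrt t ^ k * Mker k) := by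
  have hs : 0 < Real.sqrt t := Real.sqrt_pos.mpr ht
  have h := MeasureTheory.Measure.integral_comp_mul_left
    (fun y : ℝ => |y| ^ k * Real.exp (-y ^ 2 / t)) (Real.sqrt t)
  have hLHS : (∫ x : ℝ, |Real.sqrt t * x| ^ k * Real.exp (-(Real.sqrt t * x) ^ 2 / t))
      = Real.sqrt t ^ k * Mker k := by
    have : (fun x : ℝ => |Real.sqrt t * x| ^ k * Real.exp (-(Real.sqrt t * x) ^ 2 / t))
        = fun x => Real.sqrt t ^ k * (|x| ^ k * Real.exp (-x ^ 2)) := by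
      funext x
      rw [abs_mul, abs_of_pos hs, mul_pow, mul_pow, Real.sq_sqrt ht.le,
        show -(t * x ^ 2) / t = -x ^ 2 by rw [mul_comm]; field_simp]
      ring
    rw [this, MeasureTheory.integral_const_mul, Mker]
  rw [hLHS, abs_of_pos (inv_pos.mpr hs), smul_eq_mul] at h
  have := congrArg (fun z => Real.sqrt t * z) h
  simp only [← mul_assoc, mul_inv_cancel₀ hs.ne', one_mul] at this
  linarith [this]

lemma pow_add_le_aux (p q : ℝ) (hp : 0 ≤ p) (hq : 0 ≤ q) (k : ℕ) :
    (p + q) ^ k ≤ 2 ^ k * (p ^ k + q ^ k) := by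
  have h1 : p + q ≤ 2 * max p q := by
    rcases le_total p q with h | h
    · rw [max_eq_right h]; linarith
    · rw [max_eq_left h]; linarith
  have h2 : (max p q) ^ k ≤ p ^ k + q ^ k := by
    rcases le_total p q with h | h
    · rw [max_eq_right h]; exact le_add_of_nonneg_left (pow_nonneg hp k)
    · rw [max_eq_left h]; exact le_add_of_nonneg_right (pow_nonneg hq k)
  calc (p + q) ^ k ≤ (2 * max p q) ^ k := by
        apply pow_le_pow_left₀ (by positivity) h1
    _ = 2 ^ k * (max p q) ^ k := mul_pow _ _ _
    _ ≤ 2 ^ k * (p ^ k + q ^ k) := by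
        apply mul_le_mul_of_nonneg_left h2 (by positivity)

lemma core_bounds (k : ℕ) (t β : ℝ) (ht : 0 < t) (hβ : 0 ≤ β) :
    (Real.exp (-4) / 2) * (Real.sqrt t * (β ^ k + Real.sqrt t ^ k)) ≤
      (∫ x in Set.Ioi (0 : ℝ), x ^ k * Real.exp (-(x - β) ^ 2 / t)) ∧
    (∫ x in Set.Ioi (0 : ℝ), x ^ k * Real.exp (-(x - β) ^ 2 / t)) ≤
      (2 ^ k * (Mker k + Real.sqrt π)) * (Real.sqrt t * (β ^ k + Real.sqrt t ^ k)) := by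
  set s := Real.sqrt t with hs_def
  have hs : 0 < s := Real.sqrt_pos.mpr ht
  have hfint := integrable_shift t β ht k
  have hfpos : ∀ x : ℝ, x ∈ Set.Ioi (0:ℝ) → 0 ≤ x ^ k * Real.exp (-(x - β) ^ 2 / t) := by
    intro x hx
    have : (0:ℝ) ≤ x := le_of_lt hx
    positivity
  constructor
  · -- lower bound
    have hsub : Set.Ioc (β + s) (β + 2 * s) ⊆ Set.Ioi (0 : ℝ) := by
      intro x hx
      have := hx.1
      simp only [Set.mem_Ioi]
      nlinarith
    have hconst : ∀ x ∈ Set.Ioc (β + s) (β + 2 * s),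
        Real.exp (-4) * ((β ^ k + s ^ k) / 2) ≤ x ^ k * Real.exp (-(x - β) ^ 2 / t) := by
      intro x hx
      obtain ⟨hx1, hx2⟩ := hx
      have hxβ : β ≤ x := by nlinarith
      have hxs : s ≤ x := by nlinarith
      have hx0 : 0 ≤ x := le_trans hs.le hxs
      have hpow : (β ^ k + s ^ k) / 2 ≤ x ^ k := by
        have h1 : β ^ k ≤ x ^ k := pow_le_pow_left₀ hβ hxβ k
        have h2 : s ^ k ≤ x ^ k := pow_le_pow_left₀ hs.le hxs k
        linarith
      have hexp : Real.exp (-4) ≤ Real.exp (-(x - β) ^ 2 / t) := by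
        apply Real.exp_le_exp.mpr
        rw [neg_div, neg_le_neg_iff, div_le_iff₀ ht]
        have h4 : x - β ≤ 2 * s := by linarith
        have h5 : 0 ≤ x - β := by linarith
        nlinarith [Real.sq_sqrt ht.le]
      calc Real.exp (-4) * ((β ^ k + s ^ k) / 2)
          ≤ Real.exp (-(x - β) ^ 2 / t) * x ^ k := by
            apply mul_le_mul hexp hpow (by positivity) (exp_pos _).le
        _ = x ^ k * Real.exp (-(x - β) ^ 2 / t) := by ring
    have step1 : Real.exp (-4) * ((β ^ k + s ^ k) / 2) * s ≤
        ∫ x in Set.Ioc (β + s) (β + 2 * s), x ^ k * Real.exp (-(x - β) ^ 2 / t) := by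
      have hmeas : volume (Set.Ioc (β + s) (β + 2 * s)) = ENNReal.ofReal s := by
        rw [Real.volume_Ioc]; congr 1; ring
      have hconst_int : ∫ _x in Set.Ioc (β + s) (β + 2 * s),
          (Real.exp (-4) * ((β ^ k + s ^ k) / 2)) = Real.exp (-4) * ((β ^ k + s ^ k) / 2) * s := by
        rw [setIntegral_const, measureReal_def, hmeas, ENNReal.toReal_ofReal hs.le, smul_eq_mul]
        ring
      rw [← hconst_int]
      apply setIntegral_mono_on
      · exact integrableOn_const (by rw [hmeas]; exact ENNReal.ofReal_ne_top)
      · exact hfint.integrableOn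
      · exact measurableSet_Ioc
      · exact hconst
    have step2 : (∫ x in Set.Ioc (β + s) (β + 2 * s), x ^ k * Real.exp (-(x - β) ^ 2 / t))
        ≤ ∫ x in Set.Ioi (0:ℝ), x ^ k * Real.exp (-(x - β) ^ 2 / t) := by
      apply setIntegral_mono_set hfint.integrableOn
      · filter_upwards [ae_restrict_mem measurableSet_Ioi] with x hx using hfpos x hx
      · exact Filter.Eventually.of_forall hsub
    calc (Real.exp (-4) / 2) * (s * (β ^ k + s ^ k))
        = Real.exp (-4) * ((β ^ k + s ^ k) / 2) * s := by ring
      _ ≤ _ := le_trans step1 step2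
  · -- upper bound
    have hg_int : Integrable (fun x : ℝ =>
        2 ^ k * ((|x - β| ^ k + β ^ k) * Real.exp (-(x - β) ^ 2 / t))) := by
      apply Integrable.const_mul
      have h1 := integrable_abs_shift t β ht k
      have h2 : Integrable (fun x : ℝ => β ^ k * Real.exp (-(x - β) ^ 2 / t)) := by
        have := (integrable_pow_gauss t ht 0).comp_sub_right β
        simp only [pow_zero, one_mul] at this
        exact this.const_mul _
      refine (h1.add h2).congr (Filter.Eventually.of_forall fun x => ?_)
      simp only [Pi.add_apply]
      ring
    have step1 : (∫ x in Set.Ioi (0:ℝ), x ^ k * Real.exp (-(x - β) ^ 2 / t)) ≤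
        ∫ x in Set.Ioi (0:ℝ),
          2 ^ k * ((|x - β| ^ k + β ^ k) * Real.exp (-(x - β) ^ 2 / t)) := by
      apply setIntegral_mono_on hfint.integrableOn hg_int.integrableOn measurableSet_Ioi
      intro x hx
      have hx0 : (0:ℝ) ≤ x := le_of_lt hx
      have hxle : x ≤ |x - β| + β := by
        have := le_abs_self (x - β)
        linarith
      have h1 : x ^ k ≤ (|x - β| + β) ^ k := pow_le_pow_left₀ hx0 hxle k
      have h2 : (|x - β| + β) ^ k ≤ 2 ^ k * (|x - β| ^ k + β ^ k) :=
        pow_add_le_aux _ _ (abs_nonneg _) hβ k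
      calc x ^ k * Real.exp (-(x - β) ^ 2 / t)
          ≤ (2 ^ k * (|x - β| ^ k + β ^ k)) * Real.exp (-(x - β) ^ 2 / t) := by
            apply mul_le_mul_of_nonneg_right (le_trans h1 h2) (exp_pos _).le
        _ = 2 ^ k * ((|x - β| ^ k + β ^ k) * Real.exp (-(x - β) ^ 2 / t)) := by ring
    have step2 : (∫ x in Set.Ioi (0:ℝ),
          2 ^ k * ((|x - β| ^ k + β ^ k) * Real.exp (-(x - β) ^ 2 / t))) ≤
        ∫ x : ℝ, 2 ^ k * ((|x - β| ^ k + β ^ k) * Real.exp (-(x - β) ^ 2 / t)) := by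
      apply setIntegral_le_integral hg_int
      filter_upwards with x
      positivity
    have hval : (∫ x : ℝ, 2 ^ k * ((|x - β| ^ k + β ^ k) * Real.exp (-(x - β) ^ 2 / t)))
        = 2 ^ k * (s * (s ^ k * Mker k) + β ^ k * (Real.sqrt π * s)) := by
      rw [MeasureTheory.integral_const_mul]
      congr 1
      have hsplit : (fun x : ℝ => (|x - β| ^ k + β ^ k) * Real.exp (-(x - β) ^ 2 / t))
          = fun x => |x - β| ^ k * Real.exp (-(x - β) ^ 2 / t)
              + β ^ k * Real.exp (-(x - β) ^ 2 / t) := by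
        funext x; ring
      rw [hsplit]
      rw [integral_add (integrable_abs_shift t β ht k)
        (((integrable_pow_gauss t ht 0).comp_sub_right β).const_mul (β ^ k) |>.congr
          (Filter.Eventually.of_forall fun x => by simp))]
      congr 1
      · have hshift := integral_sub_right_eq_self (μ := volume)
          (fun u : ℝ => |u| ^ k * Real.exp (-u ^ 2 / t)) β
        rw [hshift]
        exact gauss_abs_moment t ht k
      · rw [MeasureTheory.integral_const_mul, gauss_total t β ht]
    have final : 2 ^ k * (s * (s ^ k * Mker k) + β ^ k * (Real.sqrt π * s)) ≤
        (2 ^ k * (Mker k + Real.sqrt π)) * (s * (β ^ k + s ^ k)) := by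
      have hM := Mker_nonneg k
      have hπ : (0:ℝ) ≤ Real.sqrt π := Real.sqrt_nonneg _
      have hβk : (0:ℝ) ≤ β ^ k := pow_nonneg hβ k
      have hsk : (0:ℝ) ≤ s ^ k := pow_nonneg hs.le k
      have h2k : (0:ℝ) < 2 ^ k := by positivity
      nlinarith [mul_nonneg (mul_nonneg hM hs.le) hβk, mul_nonneg (mul_nonneg hπ hs.le) hsk,
        mul_nonneg h2k.le (mul_nonneg (mul_nonneg hM hs.le) hβk),
        mul_nonneg h2k.le (mul_nonneg (mul_nonneg hπ hs.le) hsk)]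
    calc (∫ x in Set.Ioi (0:ℝ), x ^ k * Real.exp (-(x - β) ^ 2 / t))
        ≤ ∫ x : ℝ, 2 ^ k * ((|x - β| ^ k + β ^ k) * Real.exp (-(x - β) ^ 2 / t)) :=
          le_trans step1 step2
      _ = 2 ^ k * (s * (s ^ k * Mker k) + β ^ k * (Real.sqrt π * s)) := hval
      _ ≤ _ := final

theorem stmt_5 (k : ℕ) :
    ∃ c C : ℝ, 0 < c ∧ 0 < C ∧
      ∀ ρ t a : ℝ, 0 < ρ → 0 < t → ρ * t / 2 ≤ a →
        c * (t ^ ((1 : ℝ)/2) * ((a - ρ*t/2)^k + t ^ ((k : ℝ)/2)) *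
            Real.exp (ρ^2 * t / 4 - a * ρ)) ≤
          (∫ x in Set.Ioi (0 : ℝ), x^k * Real.exp (-(x - a)^2 / t - ρ * x)) ∧
        (∫ x in Set.Ioi (0 : ℝ), x^k * Real.exp (-(x - a)^2 / t - ρ * x)) ≤
          C * (t ^ ((1 : ℝ)/2) * ((a - ρ*t/2)^k + t ^ ((k : ℝ)/2)) *
            Real.exp (ρ^2 * t / 4 - a * ρ)) := by
  refine ⟨Real.exp (-4) / 2, 2 ^ k * (Mker k + Real.sqrt π), by positivity, ?_, ?_⟩
  · have hM := Mker_nonneg k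
    have hπ : (0:ℝ) < Real.sqrt π := Real.sqrt_pos.mpr pi_pos
    positivity
  intro ρ t a hρ ht ha
  set β := a - ρ * t / 2 with hβ_def
  have hβ : 0 ≤ β := by simp only [hβ_def]; linarith
  have h1 : t ^ ((1:ℝ)/2) = Real.sqrt t := (Real.sqrt_eq_rpow t).symm
  have h2 : t ^ ((k:ℝ)/2) = Real.sqrt t ^ k := by
    rw [show ((k:ℝ)/2) = (1/2 : ℝ) * (k:ℝ) by ring, Real.rpow_mul ht.le,
      ← Real.sqrt_eq_rpow, Real.rpow_natCast]
  have hint : ∀ x : ℝ, x ^ k * Real.exp (-(x - a) ^ 2 / t - ρ * x)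
      = Real.exp (ρ ^ 2 * t / 4 - a * ρ) * (x ^ k * Real.exp (-(x - β) ^ 2 / t)) := by
    intro x
    have hA : -(x - a) ^ 2 / t - ρ * x = (ρ ^ 2 * t / 4 - a * ρ) + -(x - β) ^ 2 / t := by
      simp only [hβ_def]
      field_simp
      ring
    rw [hA, Real.exp_add]
    ring
  have hIeq : (∫ x in Set.Ioi (0 : ℝ), x ^ k * Real.exp (-(x - a) ^ 2 / t - ρ * x))
      = Real.exp (ρ ^ 2 * t / 4 - a * ρ) *
        ∫ x in Set.Ioi (0 : ℝ), x ^ k * Real.exp (-(x - β) ^ 2 / t) := by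
    simp_rw [hint]
    exact MeasureTheory.integral_const_mul _ _
  obtain ⟨hlo, hhi⟩ := core_bounds k t β ht hβ
  have hE : (0:ℝ) < Real.exp (ρ ^ 2 * t / 4 - a * ρ) := exp_pos _
  rw [hIeq, h1, h2]
  constructor
  · calc Real.exp (-4) / 2 * (Real.sqrt t * (β ^ k + Real.sqrt t ^ k) *
          Real.exp (ρ ^ 2 * t / 4 - a * ρ))
        = (Real.exp (-4) / 2 * (Real.sqrt t * (β ^ k + Real.sqrt t ^ k))) *
            Real.exp (ρ ^ 2 * t / 4 - a * ρ) := by ring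
      _ ≤ (∫ x in Set.Ioi (0 : ℝ), x ^ k * Real.exp (-(x - β) ^ 2 / t)) *
            Real.exp (ρ ^ 2 * t / 4 - a * ρ) :=
          mul_le_mul_of_nonneg_right hlo hE.le
      _ = Real.exp (ρ ^ 2 * t / 4 - a * ρ) *
            ∫ x in Set.Ioi (0 : ℝ), x ^ k * Real.exp (-(x - β) ^ 2 / t) := by ring
  · calc Real.exp (ρ ^ 2 * t / 4 - a * ρ) *
          ∫ x in Set.Ioi (0 : ℝ), x ^ k * Real.exp (-(x - β) ^ 2 / t)
        = (∫ x in Set.Ioi (0 : ℝ), x ^ k * Real.exp (-(x - β) ^ 2 / t)) *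
            Real.exp (ρ ^ 2 * t / 4 - a * ρ) := by ring
      _ ≤ ((2 ^ k * (Mker k + Real.sqrt π)) * (Real.sqrt t * (β ^ k + Real.sqrt t ^ k))) *
            Real.exp (ρ ^ 2 * t / 4 - a * ρ) :=
          mul_le_mul_of_nonneg_right hhi hE.le
      _ = 2 ^ k * (Mker k + Real.sqrt π) * (Real.sqrt t * (β ^ k + Real.sqrt t ^ k) *
            Real.exp (ρ ^ 2 * t / 4 - a * ρ)) := by ring
end

section
/- Let k be a natural number and let ρ, t > 0 be real. If a < ρt/2, then there exist positive constants c, C (depending only on k) with c · t^{k+1}/((ρt/2 − a)^{k+1} + t^{(k+1)/2}) · e^{-a²/t} ≤ ∫₀^∞ x^k e^{-(x−a)²/t − ρx} dx ≤ C · t^{k+1}/((ρt/2 − a)^{k+1} + t^{(k+1)/2}) · e^{-a²/t}. -/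
set_option maxHeartbeats 1000000

open MeasureTheory Real Set

lemma pow_exp_integrableOn (k : ℕ) {b : ℝ} (hb : 0 < b) :
    IntegrableOn (fun x : ℝ => x ^ k * Real.exp (-(b * x))) (Ioi 0) := by
  have h := integrableOn_rpow_mul_exp_neg_mul_rpow
    (p := 1) (s := (k : ℝ)) (b := b)
    (lt_of_lt_of_le (by norm_num) (Nat.cast_nonneg k)) one_pos hb
  have he : ∀ x : ℝ, x ^ (k : ℝ) * Real.exp (-(b * x ^ (1:ℝ)))
      = x ^ k * Real.exp (-(b * x)) := by
    intro x; rw [Real.rpow_natCast, Real.rpow_one]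
  simpa [he] using h

lemma pow_exp_integral (k : ℕ) {b : ℝ} (hb : 0 < b) :
    ∫ x in Ioi (0:ℝ), x ^ k * Real.exp (-(b * x)) = k.factorial / b ^ (k+1) := by
  have h := Real.integral_rpow_mul_exp_neg_mul_Ioi (a := (k : ℝ) + 1) (r := b)
    (by positivity) hb
  rw [show ((k:ℝ) + 1) - 1 = (k:ℝ) by ring,
    show ((k:ℝ) + 1) = ((k+1 : ℕ) : ℝ) by push_cast; ring] at h
  simp_rw [Real.rpow_natCast] at h
  rw [h, show ((k+1:ℕ):ℝ) = (k:ℝ)+1 from by push_cast; ring, Real.Gamma_nat_eq_factorial, one_div, inv_pow]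
  field_simp

theorem stmt_6 (k : ℕ) :
    ∃ c C : ℝ, 0 < c ∧ 0 < C ∧
      ∀ ρ t a : ℝ, 0 < ρ → 0 < t → a < ρ * t / 2 →
        c * (t^(k+1) / ((ρ*t/2 - a)^(k+1) + t ^ (((k : ℝ)+1)/2)) *
            Real.exp (-a^2 / t)) ≤
          (∫ x in Set.Ioi (0 : ℝ), x^k * Real.exp (-(x - a)^2 / t - ρ * x)) ∧
        (∫ x in Set.Ioi (0 : ℝ), x^k * Real.exp (-(x - a)^2 / t - ρ * x)) ≤
          C * (t^(k+1) / ((ρ*t/2 - a)^(k+1) + t ^ (((k : ℝ)+1)/2)) *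
            Real.exp (-a^2 / t)) := by
  refine ⟨Real.exp (-3) / ((k:ℝ)+1), 2 * Real.exp 1 * k.factorial,
    by positivity, by positivity, ?_⟩
  intro ρ t a hρ ht ha
  have hβ0 : 0 < ρ * t / 2 - a := by linarith
  set β : ℝ := ρ * t / 2 - a with hβdef
  have hβ : 0 < β := hβ0
  have hst : 0 < Real.sqrt t := Real.sqrt_pos.mpr ht
  have hst2 : Real.sqrt t * Real.sqrt t = t := Real.mul_self_sqrt ht.le
  have hT : t ^ (((k:ℝ)+1)/2) = Real.sqrt t ^ (k+1) := by
    rw [Real.sqrt_eq_rpow, ← Real.rpow_natCast (t ^ ((1:ℝ)/2)) (k+1),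
      ← Real.rpow_mul ht.le]
    congr 1
    push_cast
    ring
  set D : ℝ := β^(k+1) + t ^ (((k:ℝ)+1)/2) with hDdef
  have hD : 0 < D := by
    rw [hDdef, hT]; positivity
  have hexp : ∀ x : ℝ, -(x - a)^2 / t - ρ * x = (β^2 - a^2)/t + (-(x + β)^2 / t) := by
    intro x; rw [hβdef]; field_simp; ring
  have hfun : ∀ x : ℝ, x ^ k * Real.exp (-(x - a)^2 / t - ρ * x)
      = Real.exp ((β^2 - a^2)/t) * (x ^ k * Real.exp (-(x + β)^2 / t)) := by
    intro x; rw [hexp x, Real.exp_add]; ring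
  have hI : (∫ x in Ioi (0:ℝ), x^k * Real.exp (-(x - a)^2 / t - ρ * x))
      = Real.exp ((β^2 - a^2)/t) * ∫ x in Ioi (0:ℝ), x^k * Real.exp (-(x + β)^2 / t) := by
    simp_rw [hfun]
    rw [integral_const_mul]
  set J : ℝ := ∫ x in Ioi (0:ℝ), x^k * Real.exp (-(x + β)^2 / t) with hJdef
  have hE : Real.exp ((β^2 - a^2)/t) * Real.exp (-β^2/t) = Real.exp (-a^2/t) := by
    rw [← Real.exp_add]; congr 1; field_simp; ring
  set lam : ℝ := (2*β + Real.sqrt t)/t with hlam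
  have hlam0 : 0 < lam := by rw [hlam]; positivity
  -- pointwise upper bound
  have hub : ∀ x ∈ Ioi (0:ℝ), x^k * Real.exp (-(x + β)^2 / t)
      ≤ Real.exp 1 * Real.exp (-β^2/t) * (x^k * Real.exp (-(lam * x))) := by
    intro x hx
    have hx0 : 0 < x := hx
    have key : -(x + β)^2/t ≤ 1 + (-β^2/t) + (-(lam * x)) := by
      have hq : 1 + (-β^2/t) + (-(lam * x)) - (-(x + β)^2/t)
          = (t - Real.sqrt t * x + x^2)/t := by
        rw [hlam]; field_simp; ring
      have hnum : 0 ≤ t - Real.sqrt t * x + x^2 := by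
        nlinarith [sq_nonneg (Real.sqrt t - x)]
      have : 0 ≤ 1 + (-β^2/t) + (-(lam * x)) - (-(x + β)^2/t) := by
        rw [hq]; positivity
      linarith
    calc x^k * Real.exp (-(x + β)^2 / t)
        ≤ x^k * Real.exp (1 + (-β^2/t) + (-(lam * x))) := by
          have := Real.exp_le_exp.mpr key
          exact mul_le_mul_of_nonneg_left this (pow_nonneg hx0.le k)
      _ = Real.exp 1 * Real.exp (-β^2/t) * (x^k * Real.exp (-(lam * x))) := by
          rw [Real.exp_add, Real.exp_add]; ring
  have hint_b : IntegrableOn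
      (fun x : ℝ => Real.exp 1 * Real.exp (-β^2/t) * (x^k * Real.exp (-(lam * x))))
      (Ioi 0) := (pow_exp_integrableOn k hlam0).const_mul _
  have hg_int : IntegrableOn (fun x : ℝ => x^k * Real.exp (-(x + β)^2 / t)) (Ioi 0) := by
    apply Integrable.mono' hint_b
    · exact (Continuous.aestronglyMeasurable (by fun_prop))
    · filter_upwards [ae_restrict_mem measurableSet_Ioi] with x hx
      rw [Real.norm_eq_abs, abs_of_nonneg
        (mul_nonneg (pow_nonneg (le_of_lt hx) k) (Real.exp_pos _).le)]
      exact hub x hx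
  have hJu : J ≤ Real.exp 1 * Real.exp (-β^2/t) * (k.factorial / lam^(k+1)) := by
    rw [hJdef]
    calc (∫ x in Ioi (0:ℝ), x^k * Real.exp (-(x + β)^2 / t))
        ≤ ∫ x in Ioi (0:ℝ), Real.exp 1 * Real.exp (-β^2/t) * (x^k * Real.exp (-(lam * x))) :=
          setIntegral_mono_on hg_int hint_b measurableSet_Ioi hub
      _ = Real.exp 1 * Real.exp (-β^2/t) * (k.factorial / lam^(k+1)) := by
          rw [integral_const_mul, pow_exp_integral k hlam0]
  have hlampow : (k.factorial : ℝ) / lam^(k+1)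
      = k.factorial * (t^(k+1)/(2*β + Real.sqrt t)^(k+1)) := by
    rw [hlam, div_pow, div_div_eq_mul_div, mul_div_assoc]
  -- lower bound
  set m : ℝ := max β (Real.sqrt t) with hmdef
  have hm : 0 < m := lt_max_of_lt_left hβ
  have hmt : t/m ≤ Real.sqrt t := by
    rw [div_le_iff₀ hm]
    nlinarith [le_max_right β (Real.sqrt t)]
  have hβm : β ≤ m := le_max_left _ _
  have htm : 0 < t/m := div_pos ht hm
  have hlb : ∀ x ∈ Ioc (0:ℝ) (t/m), Real.exp (-3) * Real.exp (-β^2/t) * x^k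
      ≤ x^k * Real.exp (-(x + β)^2 / t) := by
    intro x hx
    have hx0 : 0 < x := hx.1
    have hxs : x ≤ Real.sqrt t := hx.2.trans hmt
    have hβx : β * x ≤ t := by
      calc β * x ≤ m * x := by gcongr
        _ ≤ m * (t/m) := by gcongr; exact hx.2
        _ = t := by field_simp
    have hx2 : x^2 ≤ t := by nlinarith
    have key : (-3) + (-β^2/t) ≤ -(x + β)^2/t := by
      have hq : -(x + β)^2/t - ((-3) + (-β^2/t)) = (3*t - x^2 - 2*(β*x))/t := by
        field_simp; ring
      have hnum : 0 ≤ 3*t - x^2 - 2*(β*x) := by linarith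
      have : 0 ≤ -(x + β)^2/t - ((-3) + (-β^2/t)) := by
        rw [hq]; positivity
      linarith
    calc Real.exp (-3) * Real.exp (-β^2/t) * x^k
        = x^k * Real.exp ((-3) + (-β^2/t)) := by rw [Real.exp_add]; ring
      _ ≤ x^k * Real.exp (-(x + β)^2/t) :=
          mul_le_mul_of_nonneg_left (Real.exp_le_exp.mpr key) (pow_nonneg hx0.le k)
  have hJl : Real.exp (-3) * Real.exp (-β^2/t) * ((t/m)^(k+1) / ((k:ℝ)+1)) ≤ J := by
    have h1 : (∫ x in Ioc (0:ℝ) (t/m), x^k * Real.exp (-(x + β)^2 / t)) ≤ J := by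
      rw [hJdef]
      apply setIntegral_mono_set hg_int
      · filter_upwards [ae_restrict_mem measurableSet_Ioi] with x hx
        exact mul_nonneg (pow_nonneg (le_of_lt hx) k) (Real.exp_pos _).le
      · exact HasSubset.Subset.eventuallyLE Ioc_subset_Ioi_self
    have h2 : (∫ x in Ioc (0:ℝ) (t/m), Real.exp (-3) * Real.exp (-β^2/t) * x^k)
        ≤ ∫ x in Ioc (0:ℝ) (t/m), x^k * Real.exp (-(x + β)^2 / t) := by
      apply setIntegral_mono_on
      · exact (Continuous.integrableOn_Ioc (by fun_prop))
      · exact hg_int.mono_set Ioc_subset_Ioi_self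
      · exact measurableSet_Ioc
      · exact hlb
    have h3 : (∫ x in Ioc (0:ℝ) (t/m), Real.exp (-3) * Real.exp (-β^2/t) * x^k)
        = Real.exp (-3) * Real.exp (-β^2/t) * ((t/m)^(k+1) / ((k:ℝ)+1)) := by
      rw [integral_const_mul]
      congr 1
      rw [← intervalIntegral.integral_of_le htm.le, integral_pow]
      simp
    linarith
  -- combine
  have hP : (0:ℝ) < 2*β + Real.sqrt t := by positivity
  have hDle : D ≤ 2 * (2*β + Real.sqrt t)^(k+1) := by
    rw [hDdef, hT, two_mul]
    gcongr <;> linarith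
  have hfrac1 : t^(k+1)/(2*β + Real.sqrt t)^(k+1) ≤ 2 * (t^(k+1)/D) := by
    rw [mul_div_assoc'] at *
    rw [div_le_div_iff₀ (by positivity) hD]
    have := mul_le_mul_of_nonneg_left hDle (pow_pos ht (k+1)).le
    nlinarith
  have hmD : m^(k+1) ≤ D := by
    rw [hDdef, hT]
    rcases max_cases β (Real.sqrt t) with ⟨h, _⟩ | ⟨h, _⟩ <;> rw [hmdef, h]
    · nlinarith [pow_pos hst (k+1)]
    · nlinarith [pow_pos hβ (k+1)]
  have hfrac2 : t^(k+1)/D ≤ (t/m)^(k+1) := by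
    rw [div_pow, div_le_div_iff₀ hD (by positivity)]
    have := mul_le_mul_of_nonneg_left hmD (pow_pos ht (k+1)).le
    nlinarith
  constructor
  · rw [hI]
    calc Real.exp (-3) / ((k:ℝ)+1) * (t^(k+1)/D * Real.exp (-a^2/t))
        ≤ Real.exp (-3) / ((k:ℝ)+1) * ((t/m)^(k+1) * Real.exp (-a^2/t)) := by
          gcongr
      _ = Real.exp ((β^2 - a^2)/t) *
          (Real.exp (-3) * Real.exp (-β^2/t) * ((t/m)^(k+1) / ((k:ℝ)+1))) := by
          rw [← hE]; ring
      _ ≤ Real.exp ((β^2 - a^2)/t) * J :=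
          mul_le_mul_of_nonneg_left hJl (Real.exp_pos _).le
  · rw [hI]
    calc Real.exp ((β^2 - a^2)/t) * J
        ≤ Real.exp ((β^2 - a^2)/t) *
          (Real.exp 1 * Real.exp (-β^2/t) * (k.factorial / lam^(k+1))) :=
          mul_le_mul_of_nonneg_left hJu (Real.exp_pos _).le
      _ = Real.exp 1 * k.factorial *
          ((t^(k+1)/(2*β + Real.sqrt t)^(k+1)) * Real.exp (-a^2/t)) := by
          rw [hlampow, ← hE]; ring
      _ ≤ Real.exp 1 * k.factorial * ((2 * (t^(k+1)/D)) * Real.exp (-a^2/t)) := by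
          gcongr
      _ = 2 * Real.exp 1 * k.factorial * (t^(k+1)/D * Real.exp (-a^2/t)) := by
          ring
end

section
/- For every natural number k and all real b ≥ 0 and t > 0, there exist positive constants c, C (depending only on k) such that c · t^{1/2}(t^{k/2} + b^k) ≤ ∫₀^∞ y^k e^{-(y−b)²/t} dy ≤ C · t^{1/2}(t^{k/2} + b^k). -/
open MeasureTheory Real Set

lemma pow_div_fact_le_exp (k : ℕ) {x : ℝ} (hx : 0 ≤ x) :
    x ^ k / k.factorial ≤ Real.exp x := by
  calc x ^ k / k.factorial
      ≤ ∑ i ∈ Finset.range (k + 1), x ^ i / i.factorial := by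
        refine Finset.single_le_sum (f := fun i => x ^ i / (i.factorial : ℝ))
          (fun i _ => by positivity) (Finset.self_mem_range_succ k)
    _ ≤ Real.exp x := Real.sum_le_exp_of_nonneg hx _

lemma key_bound (k : ℕ) {s : ℝ} (hs : 0 < s) (u : ℝ) :
    |u| ^ k * Real.exp (-u ^ 2 / (2 * s ^ 2)) ≤ ((k.factorial : ℝ) * 2 ^ k + 1) * s ^ k := by
  have hsk : (0 : ℝ) < s ^ k := pow_pos hs k
  have hKn : (0:ℝ) ≤ (k.factorial : ℝ) * 2 ^ k := by positivity
  rcases le_total (|u|) s with h | h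
  · have h1 : Real.exp (-u ^ 2 / (2 * s ^ 2)) ≤ 1 := by
      apply Real.exp_le_one_iff.2
      have h0 : (0:ℝ) ≤ u ^ 2 / (2 * s ^ 2) := by positivity
      rw [neg_div]; linarith
    calc |u| ^ k * Real.exp (-u ^ 2 / (2 * s ^ 2))
        ≤ s ^ k * 1 := mul_le_mul (pow_le_pow_left₀ (abs_nonneg u) h k) h1
          (Real.exp_nonneg _) hsk.le
      _ = 1 * s ^ k := by ring
      _ ≤ ((k.factorial : ℝ) * 2 ^ k + 1) * s ^ k := by gcongr; linarith
  · have hu : 0 < |u| := lt_of_lt_of_le hs h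
    have hne : |u| ^ k ≠ 0 := (pow_pos hu k).ne'
    set x : ℝ := u ^ 2 / (2 * s ^ 2) with hx
    have hu2 : u ^ 2 = |u| ^ 2 := (sq_abs u).symm
    have hx0 : 0 < x := by rw [hx, hu2]; positivity
    have hxk : 0 < x ^ k := pow_pos hx0 k
    have h1 : x ^ k / k.factorial ≤ Real.exp x := pow_div_fact_le_exp k hx0.le
    have hfac : (0:ℝ) < k.factorial := by positivity
    have h2 : Real.exp (-x) ≤ (k.factorial : ℝ) / x ^ k := by
      rw [Real.exp_neg]
      have h3 : (0:ℝ) < x ^ k / k.factorial := by positivity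
      calc (Real.exp x)⁻¹ ≤ (x ^ k / k.factorial)⁻¹ := by
            exact inv_anti₀ h3 h1
        _ = (k.factorial : ℝ) / x ^ k := by rw [inv_div]
    have hxk_eq : x ^ k = (|u| ^ k) ^ 2 / (2 * s ^ 2) ^ k := by
      rw [hx, div_pow, hu2, ← pow_mul, ← pow_mul, Nat.mul_comm]
    have habs : s ^ k ≤ |u| ^ k := pow_le_pow_left₀ hs.le h k
    rw [show -u ^ 2 / (2 * s ^ 2) = -x from by rw [hx]; ring]
    calc |u| ^ k * Real.exp (-x)
        ≤ |u| ^ k * ((k.factorial : ℝ) / x ^ k) := by gcongr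
      _ = (k.factorial : ℝ) * (2 * s ^ 2) ^ k / |u| ^ k := by
          rw [hxk_eq]
          field_simp
      _ ≤ (k.factorial : ℝ) * (2 * s ^ 2) ^ k / s ^ k := by
          gcongr
      _ = (k.factorial : ℝ) * 2 ^ k * s ^ k := by
          rw [div_eq_iff (pow_ne_zero k hs.ne'), mul_pow]; ring
      _ ≤ ((k.factorial : ℝ) * 2 ^ k + 1) * s ^ k := by nlinarith

lemma two_pow_bound {a c : ℝ} (ha : 0 ≤ a) (hc : 0 ≤ c) (k : ℕ) :
    (a + c) ^ k ≤ 2 ^ k * (a ^ k + c ^ k) := by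
  calc (a + c) ^ k ≤ (2 * max a c) ^ k := by
        apply pow_le_pow_left₀ (by positivity)
        rcases le_total a c with h | h
        · rw [max_eq_right h]; linarith
        · rw [max_eq_left h]; linarith
    _ = 2 ^ k * (max a c) ^ k := mul_pow 2 _ k
    _ ≤ 2 ^ k * (a ^ k + c ^ k) := by
        gcongr 2 ^ k * ?_
        rcases le_total a c with h | h
        · rw [max_eq_right h]; nlinarith [pow_nonneg ha k]
        · rw [max_eq_left h]; nlinarith [pow_nonneg hc k]

lemma pt_bound (k : ℕ) {b s : ℝ} (hb : 0 ≤ b) (hs : 0 < s) (y : ℝ) :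
    |y ^ k * Real.exp (-(y - b) ^ 2 / s ^ 2)| ≤
      2 ^ k * (((k.factorial : ℝ) * 2 ^ k + 1) * (s ^ k + b ^ k)) *
        Real.exp (-(y - b) ^ 2 / (2 * s ^ 2)) := by
  set K : ℝ := (k.factorial : ℝ) * 2 ^ k + 1 with hKdef
  have hK1 : (1:ℝ) ≤ K := by
    have : (0:ℝ) ≤ (k.factorial : ℝ) * 2 ^ k := by positivity
    rw [hKdef]; linarith
  set u : ℝ := y - b with hu
  set E : ℝ := Real.exp (-u ^ 2 / (2 * s ^ 2)) with hE
  have hE0 : 0 < E := Real.exp_pos _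
  have h1 : |y ^ k * Real.exp (-u ^ 2 / s ^ 2)| = |y| ^ k * Real.exp (-u ^ 2 / s ^ 2) := by
    rw [abs_mul, abs_pow, abs_of_pos (Real.exp_pos _)]
  have h2 : |y| ^ k ≤ 2 ^ k * (|u| ^ k + b ^ k) := by
    calc |y| ^ k ≤ (|u| + b) ^ k := by
          apply pow_le_pow_left₀ (abs_nonneg y)
          calc |y| = |u + b| := by rw [hu]; ring_nf
            _ ≤ |u| + |b| := abs_add_le u b
            _ = |u| + b := by rw [abs_of_nonneg hb]
      _ ≤ 2 ^ k * (|u| ^ k + b ^ k) := two_pow_bound (abs_nonneg u) hb k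
  have hsplit : Real.exp (-u ^ 2 / s ^ 2) = E * E := by
    rw [hE, ← Real.exp_add]
    congr 1
    field_simp
    ring
  have hEle : Real.exp (-u ^ 2 / s ^ 2) ≤ E := by
    rw [hE]
    apply Real.exp_le_exp.2
    rw [neg_div, neg_div, neg_le_neg_iff]
    apply div_le_div_of_nonneg_left (by positivity) (by positivity) (by nlinarith)
  have hkey : |u| ^ k * E ≤ K * s ^ k := key_bound k hs u
  have p1 : |u| ^ k * Real.exp (-u ^ 2 / s ^ 2) ≤ (K * s ^ k) * E := by
    rw [hsplit, ← mul_assoc]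
    exact mul_le_mul_of_nonneg_right hkey hE0.le
  have p2 : b ^ k * Real.exp (-u ^ 2 / s ^ 2) ≤ b ^ k * E :=
    mul_le_mul_of_nonneg_left hEle (pow_nonneg hb k)
  have hbk : (0:ℝ) ≤ b ^ k := pow_nonneg hb k
  have h2k : (0:ℝ) ≤ 2 ^ k := by positivity
  calc |y ^ k * Real.exp (-u ^ 2 / s ^ 2)|
      = |y| ^ k * Real.exp (-u ^ 2 / s ^ 2) := h1
    _ ≤ (2 ^ k * (|u| ^ k + b ^ k)) * Real.exp (-u ^ 2 / s ^ 2) :=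
        mul_le_mul_of_nonneg_right h2 (Real.exp_nonneg _)
    _ = 2 ^ k * (|u| ^ k * Real.exp (-u ^ 2 / s ^ 2))
        + 2 ^ k * (b ^ k * Real.exp (-u ^ 2 / s ^ 2)) := by ring
    _ ≤ 2 ^ k * ((K * s ^ k) * E) + 2 ^ k * (b ^ k * E) := by
        exact add_le_add (mul_le_mul_of_nonneg_left p1 h2k)
          (mul_le_mul_of_nonneg_left p2 h2k)
    _ ≤ 2 ^ k * (K * (s ^ k + b ^ k)) * E := by
        have : b ^ k * E ≤ K * (b ^ k * E) := le_mul_of_one_le_left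
          (mul_nonneg hbk hE0.le) hK1
        nlinarith [mul_le_mul_of_nonneg_left this h2k]

lemma gauss_int {s : ℝ} (hs : 0 < s) (b : ℝ) :
    ∫ y : ℝ, Real.exp (-(y - b) ^ 2 / (2 * s ^ 2)) = Real.sqrt (2 * π) * s := by
  have heq : (fun y : ℝ => Real.exp (-(y - b) ^ 2 / (2 * s ^ 2)))
      = fun y : ℝ => (fun x : ℝ => Real.exp (-(1 / (2 * s ^ 2)) * x ^ 2)) (y - b) := by
    funext y
    congr 1
    field_simp
  rw [heq, integral_sub_right_eq_self (fun x : ℝ => Real.exp (-(1 / (2 * s ^ 2)) * x ^ 2)) b,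
    integral_gaussian]
  rw [show π / (1 / (2 * s ^ 2)) = 2 * π * s ^ 2 from by field_simp]
  rw [Real.sqrt_mul (by positivity), Real.sqrt_sq hs.le]

lemma integ (k : ℕ) {b s : ℝ} (hb : 0 ≤ b) (hs : 0 < s) :
    Integrable (fun y : ℝ => y ^ k * Real.exp (-(y - b) ^ 2 / s ^ 2)) := by
  have hg : Integrable (fun x : ℝ => Real.exp (-(1 / (2 * s ^ 2)) * x ^ 2)) :=
    integrable_exp_neg_mul_sq (by positivity)
  have hg2 : Integrable (fun y : ℝ => Real.exp (-(y - b) ^ 2 / (2 * s ^ 2))) := by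
    have := hg.comp_sub_right b
    convert this using 2 with y
    congr 1
    field_simp
  have hg3 := hg2.const_mul (2 ^ k * (((k.factorial : ℝ) * 2 ^ k + 1) * (s ^ k + b ^ k)))
  refine hg3.mono ?_ ?_
  · apply Continuous.aestronglyMeasurable
    continuity
  · filter_upwards with y
    rw [Real.norm_eq_abs, Real.norm_eq_abs]
    calc |y ^ k * Real.exp (-(y - b) ^ 2 / s ^ 2)|
        ≤ 2 ^ k * (((k.factorial : ℝ) * 2 ^ k + 1) * (s ^ k + b ^ k)) *
          Real.exp (-(y - b) ^ 2 / (2 * s ^ 2)) := pt_bound k hb hs y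
      _ ≤ |2 ^ k * (((k.factorial : ℝ) * 2 ^ k + 1) * (s ^ k + b ^ k)) *
          Real.exp (-(y - b) ^ 2 / (2 * s ^ 2))| := le_abs_self _

theorem stmt_7 (k : ℕ) :
    ∃ c C : ℝ, 0 < c ∧ 0 < C ∧
      ∀ b t : ℝ, 0 ≤ b → 0 < t →
        c * (t ^ ((1 : ℝ)/2) * (t ^ ((k : ℝ)/2) + b^k)) ≤
          (∫ y in Set.Ioi (0 : ℝ), y^k * Real.exp (-(y - b)^2 / t)) ∧
        (∫ y in Set.Ioi (0 : ℝ), y^k * Real.exp (-(y - b)^2 / t)) ≤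
          C * (t ^ ((1 : ℝ)/2) * (t ^ ((k : ℝ)/2) + b^k)) := by
  have hK0 : (0:ℝ) < (k.factorial : ℝ) * 2 ^ k + 1 := by positivity
  refine ⟨Real.exp (-4) / 2, 2 ^ k * ((k.factorial : ℝ) * 2 ^ k + 1) * Real.sqrt (2 * π),
    by positivity, by positivity, ?_⟩
  intro b t hb ht
  obtain ⟨s, hs, hst⟩ : ∃ s : ℝ, 0 < s ∧ s ^ 2 = t :=
    ⟨Real.sqrt t, Real.sqrt_pos.2 ht, Real.sq_sqrt ht.le⟩
  have ht12 : t ^ ((1:ℝ)/2) = s := by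
    rw [← hst, ← Real.sqrt_eq_rpow, Real.sqrt_sq hs.le]
  have htk : t ^ ((k : ℝ)/2) = s ^ k := by
    rw [show ((k:ℝ)/2) = (1/2 : ℝ) * (k:ℕ) from by ring,
      Real.rpow_mul ht.le, ← Real.sqrt_eq_rpow, ← hst, Real.sqrt_sq hs.le,
      Real.rpow_natCast]
  rw [ht12, htk, ← hst]
  set K : ℝ := (k.factorial : ℝ) * 2 ^ k + 1 with hKdef
  set f : ℝ → ℝ := fun y => y ^ k * Real.exp (-(y - b) ^ 2 / s ^ 2) with hf
  have hint : Integrable f := integ k hb hs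
  have hg2 : Integrable (fun y : ℝ => Real.exp (-(y - b) ^ 2 / (2 * s ^ 2))) := by
    have hg : Integrable (fun x : ℝ => Real.exp (-(1 / (2 * s ^ 2)) * x ^ 2)) :=
      integrable_exp_neg_mul_sq (by positivity)
    have := hg.comp_sub_right b
    convert this using 2 with y
    congr 1
    field_simp
  constructor
  · -- lower bound
    have hbs : 0 < b + s := by linarith
    have hsub : Ioc (b + s) (b + 2 * s) ⊆ Ioi (0:ℝ) := fun y hy =>
      lt_trans hbs hy.1
    have low1 : ∫ y in Ioc (b + s) (b + 2 * s), f y ≤ ∫ y in Ioi (0:ℝ), f y := by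
      apply setIntegral_mono_set hint.integrableOn
      · filter_upwards [ae_restrict_mem measurableSet_Ioi] with y hy
        have hy0 : 0 < y := hy
        rw [hf]
        positivity
      · exact HasSubset.Subset.eventuallyLE hsub
    have low2 : ∫ _y in Ioc (b + s) (b + 2 * s), ((b + s) ^ k * Real.exp (-4 : ℝ)) ≤
        ∫ y in Ioc (b + s) (b + 2 * s), f y := by
      apply setIntegral_mono_on
      · exact integrableOn_const (by rw [Real.volume_Ioc]; exact ENNReal.ofReal_ne_top)
      · exact hint.integrableOn
      · exact measurableSet_Ioc
      · intro y hy
        obtain ⟨hy1, hy2⟩ := hy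
        have hy0 : 0 ≤ y := by linarith
        rw [hf]
        apply mul_le_mul (pow_le_pow_left₀ hbs.le hy1.le k) ?_ (Real.exp_nonneg _)
          (pow_nonneg hy0 k)
        apply Real.exp_le_exp.2
        rw [neg_div, neg_le_neg_iff]
        rw [div_le_iff₀ (by positivity)]
        nlinarith
    have low3 : ∫ _y in Ioc (b + s) (b + 2 * s), ((b + s) ^ k * Real.exp (-4 : ℝ)) =
        s * ((b + s) ^ k * Real.exp (-4 : ℝ)) := by
      rw [setIntegral_const, measureReal_def, Real.volume_Ioc, smul_eq_mul,
        ENNReal.toReal_ofReal (by linarith)]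
      ring_nf
    have h1 : s ^ k ≤ (b + s) ^ k := pow_le_pow_left₀ hs.le (by linarith) k
    have h2 : b ^ k ≤ (b + s) ^ k := pow_le_pow_left₀ hb (by linarith) k
    have h3 : s ^ k + b ^ k ≤ 2 * (b + s) ^ k := by linarith
    have h4 := mul_le_mul_of_nonneg_left h3
      (mul_nonneg hs.le (Real.exp_nonneg (-4 : ℝ)))
    calc Real.exp (-4 : ℝ) / 2 * (s * (s ^ k + b ^ k))
        ≤ s * ((b + s) ^ k * Real.exp (-4 : ℝ)) := by nlinarith
      _ = ∫ _y in Ioc (b + s) (b + 2 * s), ((b + s) ^ k * Real.exp (-4 : ℝ)) := low3.symm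
      _ ≤ ∫ y in Ioc (b + s) (b + 2 * s), f y := low2
      _ ≤ ∫ y in Ioi (0:ℝ), f y := low1
  · -- upper bound
    set M : ℝ := 2 ^ k * (K * (s ^ k + b ^ k)) with hM
    have up1 : ∫ y in Ioi (0:ℝ), f y ≤
        ∫ y in Ioi (0:ℝ), M * Real.exp (-(y - b) ^ 2 / (2 * s ^ 2)) := by
      apply setIntegral_mono hint.integrableOn (hg2.const_mul M).integrableOn
      intro y
      calc f y ≤ |f y| := le_abs_self _
        _ ≤ M * Real.exp (-(y - b) ^ 2 / (2 * s ^ 2)) := pt_bound k hb hs y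
    have up2 : ∫ y in Ioi (0:ℝ), M * Real.exp (-(y - b) ^ 2 / (2 * s ^ 2)) ≤
        ∫ y : ℝ, M * Real.exp (-(y - b) ^ 2 / (2 * s ^ 2)) := by
      apply setIntegral_le_integral (hg2.const_mul M)
      filter_upwards with y
      have : (0:ℝ) < K := hK0
      rw [hM]
      positivity
    have up3 : ∫ y : ℝ, M * Real.exp (-(y - b) ^ 2 / (2 * s ^ 2)) =
        M * (Real.sqrt (2 * π) * s) := by
      rw [MeasureTheory.integral_const_mul, gauss_int hs b]
    calc ∫ y in Ioi (0:ℝ), f y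
        ≤ ∫ y : ℝ, M * Real.exp (-(y - b) ^ 2 / (2 * s ^ 2)) := up1.trans up2
      _ = M * (Real.sqrt (2 * π) * s) := up3
      _ = 2 ^ k * K * Real.sqrt (2 * π) * (s * (s ^ k + b ^ k)) := by rw [hM]; ring
end

section
/- For every natural number k there exist positive constants c, C such that for all γ ≥ 0, c · e^{-γ²}/(γ^{k+1} + 1) ≤ ∫₀^∞ x^k e^{-(x+γ)²} dx ≤ C · e^{-γ²}/(γ^{k+1} + 1). -/
open MeasureTheory Real Set

lemma aux_integrable (k : ℕ) {b : ℝ} (hb : 0 < b) :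
    IntegrableOn (fun x : ℝ => x ^ k * Real.exp (-(b * x))) (Set.Ioi 0) := by
  have h := integrableOn_rpow_mul_exp_neg_mul_rpow (p := 1) (s := (k : ℝ)) (b := b)
    (by exact lt_of_lt_of_le (by norm_num) (Nat.cast_nonneg k)) one_pos hb
  refine h.congr_fun (fun x hx => ?_) measurableSet_Ioi
  beta_reduce
  rw [Real.rpow_natCast, Real.rpow_one, neg_mul]

lemma aux_integral (k : ℕ) {b : ℝ} (hb : 0 < b) :
    ∫ x in Set.Ioi (0:ℝ), x ^ k * Real.exp (-(b * x)) = k.factorial / b ^ (k+1) := by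
  have h := Real.integral_rpow_mul_exp_neg_mul_Ioi (a := (k:ℝ)+1) (by positivity) hb
  have e1 : ∫ x in Set.Ioi (0:ℝ), x ^ k * Real.exp (-(b * x))
      = ∫ t in Set.Ioi (0:ℝ), t ^ ((k:ℝ)+1-1) * Real.exp (-(b*t)) := by
    refine setIntegral_congr_fun measurableSet_Ioi (fun x hx => ?_)
    rw [show (k:ℝ)+1-1 = (k:ℝ) by ring, Real.rpow_natCast]
  rw [e1, h, Real.Gamma_nat_eq_factorial,
    show (k:ℝ)+1 = ((k+1:ℕ):ℝ) by push_cast; ring, Real.rpow_natCast,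
    one_div, inv_pow, inv_mul_eq_div]

theorem stmt_8 (k : ℕ) :
    ∃ c C : ℝ, 0 < c ∧ 0 < C ∧
      ∀ γ : ℝ, 0 ≤ γ →
        c * (Real.exp (-γ^2) / (γ^(k+1) + 1)) ≤
          (∫ x in Set.Ioi (0 : ℝ), x^k * Real.exp (-(x + γ)^2)) ∧
        (∫ x in Set.Ioi (0 : ℝ), x^k * Real.exp (-(x + γ)^2)) ≤
          C * (Real.exp (-γ^2) / (γ^(k+1) + 1)) := by
  refine ⟨Real.exp (-3) / ((k+1) * 2^(k+1)), Real.exp 1 * k.factorial,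
    by positivity, by positivity, fun γ hγ => ?_⟩
  set t : ℝ := 1/(1+γ) with ht
  have h1γ : (0:ℝ) < 1 + γ := by linarith
  have ht0 : 0 < t := by positivity
  have ht1 : t ≤ 1 := by rw [ht, div_le_one h1γ]; linarith
  have hbpos : (0:ℝ) < 2 + 2*γ := by linarith
  have hg_int : IntegrableOn (fun x : ℝ => x^k * Real.exp (-((2+2*γ)*x))) (Set.Ioi 0) :=
    aux_integrable k hbpos
  have hfg : ∀ x ∈ Set.Ioi (0:ℝ), x^k * Real.exp (-(x+γ)^2)
      ≤ Real.exp (1-γ^2) * (x^k * Real.exp (-((2+2*γ)*x))) := by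
    intro x hx
    have hx0 : (0:ℝ) < x := hx
    have h1 : Real.exp (-(x+γ)^2) ≤ Real.exp (1-γ^2) * Real.exp (-((2+2*γ)*x)) := by
      rw [← Real.exp_add]
      apply Real.exp_le_exp.2
      nlinarith [sq_nonneg (x-1)]
    calc x^k * Real.exp (-(x+γ)^2)
        ≤ x^k * (Real.exp (1-γ^2) * Real.exp (-((2+2*γ)*x))) :=
          mul_le_mul_of_nonneg_left h1 (by positivity)
      _ = _ := by ring
  have hf_int : IntegrableOn (fun x : ℝ => x^k * Real.exp (-(x+γ)^2)) (Set.Ioi 0) := by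
    refine Integrable.mono' (hg_int.const_mul (Real.exp (1-γ^2))) ?_ ?_
    · exact (Continuous.aestronglyMeasurable (by fun_prop)).restrict
    · filter_upwards [ae_restrict_mem measurableSet_Ioi] with x hx
      have hx0 : (0:ℝ) < x := hx
      rw [Real.norm_eq_abs, abs_of_nonneg (by positivity)]
      exact hfg x hx
  constructor
  · -- lower bound
    have hmono : ∫ x in Set.Ioo (0:ℝ) t, x^k * Real.exp (-(x+γ)^2)
        ≤ ∫ x in Set.Ioi (0:ℝ), x^k * Real.exp (-(x+γ)^2) := by
      refine setIntegral_mono_set hf_int ?_ (HasSubset.Subset.eventuallyLE Set.Ioo_subset_Ioi_self)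
      filter_upwards [ae_restrict_mem measurableSet_Ioi] with x hx
      have : (0:ℝ) < x := hx
      positivity
    have hstep : ∫ x in Set.Ioo (0:ℝ) t, Real.exp (-(γ^2+3)) * x^k
        ≤ ∫ x in Set.Ioo (0:ℝ) t, x^k * Real.exp (-(x+γ)^2) := by
      refine setIntegral_mono_on
        (((continuous_const.mul (continuous_pow k)).integrableOn_Icc (a := 0) (b := t)).mono_set
          Set.Ioo_subset_Icc_self)
        (hf_int.mono_set Set.Ioo_subset_Ioi_self) measurableSet_Ioo ?_
      rintro x ⟨hx0, hxt⟩
      have hx1 : x ≤ 1 := hxt.le.trans ht1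
      have hxγ : x * (1+γ) ≤ 1 := by
        have := (le_div_iff₀ h1γ).1 hxt.le
        linarith [this]
      have h2 : Real.exp (-(γ^2+3)) ≤ Real.exp (-(x+γ)^2) := by
        apply Real.exp_le_exp.2
        nlinarith
      calc Real.exp (-(γ^2+3)) * x^k ≤ Real.exp (-(x+γ)^2) * x^k :=
            mul_le_mul_of_nonneg_right h2 (by positivity)
        _ = x^k * Real.exp (-(x+γ)^2) := mul_comm _ _
    have hval : ∫ x in Set.Ioo (0:ℝ) t, Real.exp (-(γ^2+3)) * x^k
        = Real.exp (-(γ^2+3)) * (t^(k+1)/(k+1)) := by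
      rw [MeasureTheory.integral_const_mul _ _]
      congr 1
      rw [← MeasureTheory.integral_Ioc_eq_integral_Ioo,
        ← intervalIntegral.integral_of_le ht0.le, integral_pow]
      ring
    have hkey2 : (1+γ)^(k+1) ≤ 2^(k+1) * (γ^(k+1)+1) := by
      have h2k : (2:ℝ) ≤ 2^(k+1) := by
        calc (2:ℝ) = 2^1 := (pow_one 2).symm
          _ ≤ 2^(k+1) := pow_le_pow_right₀ one_le_two (by omega)
      rcases le_total γ 1 with h | h
      · have hA : (1+γ)^(k+1) ≤ 2^(k+1) :=
          pow_le_pow_left₀ (by linarith) (by linarith) _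
        nlinarith [pow_nonneg hγ (k+1), pow_pos (show (0:ℝ) < 2 by norm_num) (k+1)]
      · have hA : (1+γ)^(k+1) ≤ (2*γ)^(k+1) :=
          pow_le_pow_left₀ (by linarith) (by linarith) _
        have hB : ((2:ℝ)*γ)^(k+1) = 2^(k+1)*γ^(k+1) := mul_pow _ _ _
        nlinarith [pow_pos (show (0:ℝ) < 2 by norm_num) (k+1), pow_nonneg hγ (k+1)]
    have hfin : Real.exp (-3) / ((k+1) * 2^(k+1)) * (Real.exp (-γ^2) / (γ^(k+1) + 1))
        ≤ Real.exp (-(γ^2+3)) * (t^(k+1)/(k+1)) := by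
      have e1 : Real.exp (-(γ^2+3)) * (t^(k+1)/(k+1))
          = (Real.exp (-3) * Real.exp (-γ^2)) / (((k:ℝ)+1) * (1+γ)^(k+1)) := by
        rw [ht, div_pow, one_pow, show -(γ^2+3) = -3 + -γ^2 by ring, Real.exp_add]
        field_simp
      rw [e1, div_mul_div_comm]
      have hden : ((k:ℝ)+1) * (1+γ)^(k+1) ≤ ((k:ℝ)+1) * 2^(k+1) * (γ^(k+1)+1) := by
        rw [mul_assoc]
        refine mul_le_mul_of_nonneg_left hkey2 (by positivity)
      exact div_le_div_of_nonneg_left (by positivity) (by positivity) hden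
    calc Real.exp (-3) / ((k+1) * 2^(k+1)) * (Real.exp (-γ^2) / (γ^(k+1) + 1))
        ≤ Real.exp (-(γ^2+3)) * (t^(k+1)/(k+1)) := hfin
      _ = ∫ x in Set.Ioo (0:ℝ) t, Real.exp (-(γ^2+3)) * x^k := hval.symm
      _ ≤ ∫ x in Set.Ioo (0:ℝ) t, x^k * Real.exp (-(x+γ)^2) := hstep
      _ ≤ _ := hmono
  · -- upper bound
    have hupper : ∫ x in Set.Ioi (0:ℝ), x^k * Real.exp (-(x+γ)^2)
        ≤ Real.exp (1-γ^2) * (k.factorial / (2+2*γ)^(k+1)) := by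
      calc ∫ x in Set.Ioi (0:ℝ), x^k * Real.exp (-(x+γ)^2)
          ≤ ∫ x in Set.Ioi (0:ℝ), Real.exp (1-γ^2) * (x^k * Real.exp (-((2+2*γ)*x))) :=
            setIntegral_mono_on hf_int (hg_int.const_mul _) measurableSet_Ioi hfg
        _ = Real.exp (1-γ^2) * ∫ x in Set.Ioi (0:ℝ), x^k * Real.exp (-((2+2*γ)*x)) :=
            MeasureTheory.integral_const_mul _ _
        _ = _ := by rw [aux_integral k hbpos]
    have hkey : γ^(k+1) + 1 ≤ (2+2*γ)^(k+1) := by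
      have h2k : (2:ℝ) ≤ 2^(k+1) := by
        calc (2:ℝ) = 2^1 := (pow_one 2).symm
          _ ≤ 2^(k+1) := pow_le_pow_right₀ one_le_two (by omega)
      rcases le_total γ 1 with h | h
      · have h1 : γ^(k+1) ≤ 1 := pow_le_one₀ hγ h
        have h2 : (2:ℝ)^(k+1) ≤ (2+2*γ)^(k+1) :=
          pow_le_pow_left₀ (by norm_num) (by linarith) _
        linarith
      · have h1 : (1:ℝ) ≤ γ^(k+1) := one_le_pow₀ h
        have h2 : ((2:ℝ)*γ)^(k+1) ≤ (2+2*γ)^(k+1) :=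
          pow_le_pow_left₀ (by linarith) (by linarith) _
        have h3 : ((2:ℝ)*γ)^(k+1) = 2^(k+1)*γ^(k+1) := mul_pow _ _ _
        nlinarith [pow_nonneg hγ (k+1)]
    have hfin : Real.exp (1-γ^2) * (k.factorial / (2+2*γ)^(k+1))
        ≤ (Real.exp 1 * k.factorial) * (Real.exp (-γ^2) / (γ^(k+1) + 1)) := by
      have e1 : Real.exp (1-γ^2) * ((k.factorial : ℝ) / (2+2*γ)^(k+1))
          = (Real.exp 1 * k.factorial) * (Real.exp (-γ^2) / (2+2*γ)^(k+1)) := by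
        rw [show (1-γ^2) = 1 + -γ^2 by ring, Real.exp_add]
        ring
      rw [e1]
      refine mul_le_mul_of_nonneg_left ?_ (by positivity)
      exact div_le_div_of_nonneg_left (by positivity) (by positivity) hkey
    exact hupper.trans hfin
end

section
/- For all real r > 0 and all real y with -r² < y < 4r², the inequality (r² + y)^{3/2} ≥ r³ + 3ry/2 + y²/(4r) holds. -/
open Real

theorem stmt_10 (r y : ℝ) (hr : 0 < r) (hy1 : -r^2 < y) (hy2 : y < 4*r^2) :
    (r^2 + y) ^ ((3 : ℝ)/2) ≥ r^3 + 3*r*y/2 + y^2/(4*r) := by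
  have ha : (0:ℝ) < r^2 + y := by nlinarith
  have hB : r^3 + 3*r*y/2 + y^2/(4*r) = (4*r^4 + 6*r^2*y + y^2)/(4*r) := by
    field_simp; ring
  rcases le_or_gt (r^3 + 3*r*y/2 + y^2/(4*r)) 0 with h | h
  · exact le_trans h (Real.rpow_nonneg ha.le _)
  · have key : (r^2+y)^((3:ℝ)/2) = Real.sqrt ((r^2+y)^3) := by
      rw [Real.sqrt_eq_rpow, ← Real.rpow_natCast (r^2+y) 3, ← Real.rpow_mul ha.le]
      norm_num
    rw [ge_iff_le, key, Real.le_sqrt h.le]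
    swap
    · positivity
    have h4 : 0 < 4*r^4 + 6*r^2*y + y^2 := by
      rw [hB] at h
      have := (div_pos_iff.mp h)
      rcases this with ⟨h1, _⟩ | ⟨_, h2⟩
      · exact h1
      · linarith
    rw [hB, div_pow, div_le_iff₀ (by positivity)]
    have hkey : 0 ≤ y^2 * (4*r^4 + 4*r^2*y - y^2) := by
      rcases le_or_gt y 0 with hy | hy
      · nlinarith [sq_nonneg y, mul_nonneg (sq_nonneg y) h4.le,
          mul_nonneg (sq_nonneg y) (mul_nonneg (neg_nonneg.mpr hy) ha.le)]
      · have h5 : (0:ℝ) ≤ 4*r^4 + 4*r^2*y - y^2 := by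
          nlinarith [mul_pos hy (show (0:ℝ) < 4*r^2 - y by linarith), pow_pos hr 4]
        exact mul_nonneg (sq_nonneg y) h5
    nlinarith [hkey]
end

section
/- Fix μ > 0 and t > 0. The function z ↦ z/(z + μ(1 − e^{-zt})) is monotone increasing on (0, ∞). -/
open Real Set

lemma key_aux (x y : ℝ) (hx : 0 < x) (hxy : x ≤ y) :
    x * (1 - Real.exp (-y)) ≤ y * (1 - Real.exp (-x)) := by
  have hy : 0 < y := lt_of_lt_of_le hx hxy
  have hl1 : x / y ≤ 1 := (div_le_one hy).2 hxy
  have hl0 : 0 ≤ x / y := by positivity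
  have h := convexOn_exp.2 (Set.mem_univ (0:ℝ)) (Set.mem_univ (-y))
      (by linarith : (0:ℝ) ≤ 1 - x / y) hl0 (by ring)
  simp only [smul_eq_mul, mul_zero, zero_add, Real.exp_zero, mul_one] at h
  have hxy' : x / y * -y = -x := by field_simp
  rw [hxy'] at h
  -- h : exp (-x) ≤ 1 - x/y + x/y * exp (-y)
  have h2 : y * Real.exp (-x) ≤ y * (1 - x / y + x / y * Real.exp (-y)) := by
    exact mul_le_mul_of_nonneg_left h hy.le
  have h3 : y * (1 - x / y + x / y * Real.exp (-y)) = y - x + x * Real.exp (-y) := by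
    field_simp
  nlinarith [h2, h3]

theorem stmt_11 (μ t : ℝ) (hμ : 0 < μ) (ht : 0 < t) :
    MonotoneOn (fun z : ℝ => z / (z + μ * (1 - Real.exp (-z * t)))) (Set.Ioi 0) := by
  intro a ha b hb hab
  simp only [Set.mem_Ioi] at ha hb
  have hea : Real.exp (-a * t) < 1 := Real.exp_lt_one_iff.2 (by nlinarith)
  have heb : Real.exp (-b * t) < 1 := Real.exp_lt_one_iff.2 (by nlinarith)
  have hda : 0 < a + μ * (1 - Real.exp (-a * t)) := by nlinarith
  have hdb : 0 < b + μ * (1 - Real.exp (-b * t)) := by nlinarith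
  simp only
  rw [div_le_div_iff₀ hda hdb]
  have hkey : (a * t) * (1 - Real.exp (-(b * t))) ≤ (b * t) * (1 - Real.exp (-(a * t))) :=
    key_aux (a * t) (b * t) (by positivity) (by nlinarith)
  have hra : -a * t = -(a * t) := by ring
  have hrb : -b * t = -(b * t) := by ring
  rw [hra, hrb]
  nlinarith [hkey]
end

section
/- Assume the asymptotic Ai(z) ~ (2√π z^{1/4})^{-1} e^{-(2/3)z^{3/2}} as z → ∞ for the Airy function Ai. Then lim_{r→∞} e^{-r³/3} ∫_{γ_1}^∞ e^{rz} Ai(z) dz = 1, where γ_1 < 0 is the largest zero of Ai. -/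
open Real Filter MeasureTheory

/-! ### Auxiliary definitions -/

/-- The leading asymptotic term of the Airy function. -/
noncomputable def airyLead (z : ℝ) : ℝ :=
  Real.exp (-(2/3) * z ^ ((3:ℝ)/2)) / (2 * Real.sqrt π * z ^ ((1:ℝ)/4))

/-- The rescaled integrand after the Laplace-method substitution. -/
noncomputable def airyH (r t : ℝ) : ℝ :=
  Real.sqrt (1 + t / (r * Real.sqrt r)) *
    Real.exp (-(t ^ 2 + 2/3 * t ^ 3 / (r * Real.sqrt r)))

/-- Left endpoint of the substituted domain. -/
noncomputable def airyA (A r : ℝ) : ℝ := Real.sqrt r * (Real.sqrt A - r)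

lemma sqrt_tendsto_atTop : Tendsto Real.sqrt atTop atTop := by
  apply (tendsto_rpow_atTop (y := (1/2 : ℝ)) (by norm_num)).congr'
  filter_upwards [eventually_ge_atTop (0:ℝ)] with x hx
  rw [Real.sqrt_eq_rpow]

/-- Key algebraic identity for the exponent. -/
lemma airy_exponent (w t : ℝ) (hw : w ≠ 0) :
    w^2 * (w^2 + t / w)^2 - 2/3 * (w^2 + t / w)^3
      = (w^2)^3/3 - t^2 - 2/3 * t^3 / (w^2 * w) := by
  field_simp
  ring

lemma airy_scalar (su w X Y p : ℝ) (hw : w ≠ 0) (hsu : su ≠ 0) (hp : p ≠ 0) :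
    2 * (su * su) / w * (X * Y / (2 * p * su)) = X * p⁻¹ * (su / w * Y) := by
  field_simp

/-- Substitution: for `1 ≤ A`, `√A + 1 ≤ r`, the weighted integral of the
leading term over `Ioi A` transforms into an integral of `airyH`. -/
lemma airy_subst (A r : ℝ) (hA : 1 ≤ A) (hr : Real.sqrt A + 1 ≤ r) :
    Real.exp (-r^3/3) * ∫ z in Set.Ioi A, Real.exp (r * z) * airyLead z
      = (Real.sqrt π)⁻¹ *
        ∫ t, Set.indicator (Set.Ioi (airyA A r)) (airyH r) t := by
  have hA0 : (0:ℝ) < A := lt_of_lt_of_le one_pos hA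
  have hsA : 1 ≤ Real.sqrt A := by
    rw [show (1:ℝ) = Real.sqrt 1 by simp]
    exact Real.sqrt_le_sqrt hA
  have hr0 : 0 < r := lt_of_lt_of_le (by positivity) hr
  set w := Real.sqrt r with hw
  have hw0 : 0 < w := Real.sqrt_pos.2 hr0
  have hwr : w ^ 2 = r := Real.sq_sqrt hr0.le
  set a := airyA A r with ha
  set φ : ℝ → ℝ := fun t => (r + t / w) ^ 2 with hφ
  have key : ∀ t ∈ Set.Ioi a, Real.sqrt A < r + t / w := by
    intro t ht
    have ht' : a < t := ht
    rw [ha] at ht'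
    unfold airyA at ht'
    rw [← hw] at ht'
    have h1 : (Real.sqrt A - r) * w < t := by rw [mul_comm]; exact ht'
    have h2 : Real.sqrt A - r < t / w := (lt_div_iff₀ hw0).2 h1
    linarith
  have hderiv : ∀ t ∈ Set.Ioi a,
      HasDerivWithinAt φ (2 * (r + t / w) / w) (Set.Ioi a) t := by
    intro t ht
    have h1 : HasDerivAt (fun t : ℝ => r + t / w) (1 / w) t := by
      simpa using ((hasDerivAt_id t).div_const w).const_add r
    have h2 : HasDerivAt (fun x : ℝ => (r + x / w) ^ 2)
        (((2:ℕ):ℝ) * (r + t / w) ^ (2 - 1) * (1 / w)) t := h1.fun_pow 2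
    have h4 : HasDerivAt φ (2 * (r + t / w) / w) t := by
      convert h2 using 1
      push_cast
      ring
    exact h4.hasDerivWithinAt
  have hinj : Set.InjOn φ (Set.Ioi a) := by
    intro t1 h1 t2 h2 he
    have u1 := key t1 h1
    have u2 := key t2 h2
    have hsub : ((r + t1 / w) - (r + t2 / w)) * ((r + t1 / w) + (r + t2 / w)) = 0 := by
      have : (r + t1 / w) ^ 2 = (r + t2 / w) ^ 2 := he
      nlinarith [this]
    have hpos : (r + t1 / w) + (r + t2 / w) > 0 := by linarith
    have : (r + t1 / w) - (r + t2 / w) = 0 := by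
      rcases mul_eq_zero.1 hsub with h | h
      · exact h
      · linarith
    have : t1 / w = t2 / w := by linarith
    field_simp at this
    exact this
  have himg : φ '' Set.Ioi a = Set.Ioi A := by
    ext z
    simp only [Set.mem_image, Set.mem_Ioi]
    constructor
    · rintro ⟨t, ht, rfl⟩
      have hk := key t ht
      have h0 : (0:ℝ) ≤ Real.sqrt A := Real.sqrt_nonneg A
      have : A = Real.sqrt A ^ 2 := (Real.sq_sqrt hA0.le).symm
      rw [this]
      show Real.sqrt A ^ 2 < (r + t / w) ^ 2
      nlinarith
    · intro hz
      have hz0 : 0 < z := lt_trans hA0 hz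
      refine ⟨w * (Real.sqrt z - r), ?_, ?_⟩
      · show a < w * (Real.sqrt z - r)
        rw [ha]
        unfold airyA
        have : Real.sqrt A < Real.sqrt z := Real.sqrt_lt_sqrt hA0.le hz
        rw [← hw]
        nlinarith
      · show (r + w * (Real.sqrt z - r) / w) ^ 2 = z
        rw [mul_div_cancel_left₀ _ (ne_of_gt hw0)]
        rw [add_sub_cancel]
        exact Real.sq_sqrt hz0.le
  have hchg := integral_image_eq_integral_abs_deriv_smul measurableSet_Ioi hderiv hinj
    (fun z => Real.exp (r * z) * airyLead z)
  rw [himg] at hchg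
  rw [hchg]
  have heq : Set.EqOn
      (fun t => |2 * (r + t / w) / w| • (Real.exp (r * φ t) * airyLead (φ t)))
      (fun t => (Real.exp (r^3/3) * (Real.sqrt π)⁻¹) * airyH r t) (Set.Ioi a) := by
    intro t ht
    have hk := key t ht
    set u := r + t / w with hu
    have hu1 : 1 < u := lt_of_le_of_lt hsA hk
    have hu0 : 0 < u := by linarith
    have e1 : (u^2 : ℝ) ^ ((3:ℝ)/2) = u ^ 3 := by
      rw [← Real.rpow_natCast u 2, ← Real.rpow_mul hu0.le, ← Real.rpow_natCast u 3]
      norm_num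
    have e2 : (u^2 : ℝ) ^ ((1:ℝ)/4) = Real.sqrt u := by
      rw [← Real.rpow_natCast u 2, ← Real.rpow_mul hu0.le, Real.sqrt_eq_rpow]
      norm_num
    have habs : |2 * u / w| = 2 * u / w := abs_of_pos (by positivity)
    have hexp : r * u^2 - 2/3 * u^3 = r^3/3 - (t^2 + 2/3 * t^3/(r*w)) := by
      rw [hu, ← hwr]
      have h := airy_exponent w t hw0.ne'
      linarith
    have hsqu : Real.sqrt u * Real.sqrt u = u := Real.mul_self_sqrt hu0.le
    have hsu0 : (0:ℝ) < Real.sqrt u := Real.sqrt_pos.2 hu0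
    have hsπ : (0:ℝ) < Real.sqrt π := Real.sqrt_pos.2 Real.pi_pos
    have hsu_eq : Real.sqrt (1 + t / (r * w)) = Real.sqrt u / w := by
      have h1 : 1 + t / (r * w) = u / r := by
        rw [hu, add_div, div_self hr0.ne', div_div, mul_comm w r]
      rw [h1, Real.sqrt_div hu0.le, ← hw]
    show |2 * u / w| • (Real.exp (r * u^2) * airyLead (u^2))
        = Real.exp (r^3/3) * (Real.sqrt π)⁻¹ * airyH r t
    unfold airyLead airyH
    rw [e1, e2, habs, smul_eq_mul, ← hw, hsu_eq]
    rw [show Real.exp (r * u^2) * (Real.exp (-(2/3) * u^3) / (2 * Real.sqrt π * Real.sqrt u))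
        = Real.exp (r * u^2 - 2/3 * u^3) / (2 * Real.sqrt π * Real.sqrt u) by
      rw [show r * u^2 - 2/3 * u^3 = r * u^2 + (-(2/3) * u^3) by ring, Real.exp_add]; ring]
    rw [hexp, show r^3/3 - (t^2 + 2/3 * t^3/(r*w)) = r^3/3 + -(t^2 + 2/3 * t^3/(r*w)) by ring,
      Real.exp_add]
    rw [show (2:ℝ) * u = 2 * (Real.sqrt u * Real.sqrt u) by rw [hsqu]]
    exact airy_scalar _ _ _ _ _ hw0.ne' hsu0.ne' hsπ.ne'
  rw [setIntegral_congr_fun measurableSet_Ioi heq]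
  rw [integral_const_mul, integral_indicator measurableSet_Ioi]
  rw [← mul_assoc, ← mul_assoc, ← Real.exp_add]
  rw [show -r^3/3 + r^3/3 = 0 by ring, Real.exp_zero, one_mul]

lemma airyH_nonneg (r t : ℝ) : 0 ≤ airyH r t := by
  unfold airyH
  positivity

lemma airyH_cont (r : ℝ) (hr : 1 ≤ r) : Continuous (airyH r) := by
  unfold airyH
  fun_prop

/-- The uniform bound on `airyH`. -/
lemma airyH_le (A r t : ℝ) (hA : 1 ≤ A) (hr : Real.sqrt A + 1 ≤ r)
    (ht : airyA A r < t) :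
    airyH r t ≤ Real.exp 1 * Real.exp (-(1/6) * t^2) := by
  have hsA : 1 ≤ Real.sqrt A := by
    rw [show (1:ℝ) = Real.sqrt 1 by simp]
    exact Real.sqrt_le_sqrt hA
  have hr1 : 1 ≤ r := by linarith
  have hr0 : 0 < r := by linarith
  have hw1 : 1 ≤ Real.sqrt r := by
    rw [show (1:ℝ) = Real.sqrt 1 by simp]
    exact Real.sqrt_le_sqrt hr1
  have hw0 : 0 < Real.sqrt r := by linarith
  set c := r * Real.sqrt r with hc
  have hc1 : 1 ≤ c := one_le_mul_of_one_le_of_one_le hr1 hw1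
  have hc0 : 0 < c := by linarith
  have claim1 : Real.sqrt (1 + t / c) ≤ Real.exp (|t| / 2) := by
    have habs : t / c ≤ |t| := by
      calc t / c ≤ |t / c| := le_abs_self _
      _ = |t| / |c| := abs_div t c
      _ ≤ |t| / 1 := by
          apply div_le_div_of_nonneg_left (abs_nonneg t) one_pos
          rw [abs_of_pos hc0]; exact hc1
      _ = |t| := div_one _
    have h1 : 1 + t / c ≤ Real.exp |t| := by
      have := Real.add_one_le_exp |t|
      linarith
    have h2 : Real.exp |t| = Real.exp (|t| / 2) ^ 2 := by
      rw [sq, ← Real.exp_add]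
      norm_num
    calc Real.sqrt (1 + t / c) ≤ Real.sqrt (Real.exp |t|) := Real.sqrt_le_sqrt h1
    _ = Real.exp (|t| / 2) := by rw [h2, Real.sqrt_sq (Real.exp_pos _).le]
  have claim2 : t^2 / 3 ≤ t^2 + 2/3 * t^3 / c := by
    have hq : -1 ≤ t / c := by
      rcases le_or_gt 0 t with h | h
      · have : 0 ≤ t / c := by positivity
        linarith
      · have hge : -c ≤ airyA A r := by
          unfold airyA
          have h0 : 0 ≤ Real.sqrt A := Real.sqrt_nonneg A
          rw [hc]
          nlinarith
        have htc : -c ≤ t := by linarith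
        rw [neg_le, ← neg_div]
        exact (div_le_one hc0).2 (by linarith)
    have ht3 : 2/3 * t^3 / c = 2/3 * t^2 * (t / c) := by
      field_simp
    nlinarith [sq_nonneg t]
  have hmul : airyH r t ≤ Real.exp (|t| / 2) * Real.exp (-(t^2 / 3)) := by
    unfold airyH
    apply mul_le_mul claim1 _ (Real.exp_pos _).le (Real.exp_pos _).le
    apply Real.exp_le_exp.2
    rw [← hc]
    linarith
  calc airyH r t ≤ Real.exp (|t| / 2) * Real.exp (-(t^2 / 3)) := hmul
  _ = Real.exp (|t| / 2 - t^2 / 3) := by rw [← Real.exp_add]; ring_nf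
  _ ≤ Real.exp (1 - (1/6) * t^2) := by
      apply Real.exp_le_exp.2
      nlinarith [sq_nonneg (|t| - 3/2), sq_abs t]
  _ = Real.exp 1 * Real.exp (-(1/6) * t^2) := by rw [← Real.exp_add]; ring_nf

/-- Dominated convergence: the substituted integrals converge to the Gaussian. -/
lemma airy_gauss (A : ℝ) (hA : 1 ≤ A) :
    Tendsto (fun r : ℝ => ∫ t, Set.indicator (Set.Ioi (airyA A r)) (airyH r) t)
      atTop (nhds (Real.sqrt π)) := by
  have hsA : 1 ≤ Real.sqrt A := by
    rw [show (1:ℝ) = Real.sqrt 1 by simp]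
    exact Real.sqrt_le_sqrt hA
  have hgauss : ∫ t : ℝ, Real.exp (-t^2) = Real.sqrt π := by
    simpa using integral_gaussian 1
  rw [← hgauss]
  apply tendsto_integral_filter_of_dominated_convergence
    (bound := fun t => Real.exp 1 * Real.exp (-(1/6) * t^2))
  · filter_upwards [eventually_ge_atTop (Real.sqrt A + 1)] with r hr
    exact ((airyH_cont r (by linarith)).aestronglyMeasurable).indicator measurableSet_Ioi
  · filter_upwards [eventually_ge_atTop (Real.sqrt A + 1)] with r hr
    apply ae_of_all
    intro t
    rw [Real.norm_eq_abs]
    by_cases ht : t ∈ Set.Ioi (airyA A r)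
    · rw [Set.indicator_of_mem ht, abs_of_nonneg (airyH_nonneg r t)]
      exact airyH_le A r t hA hr ht
    · rw [Set.indicator_of_notMem ht]
      simp only [abs_zero]
      positivity
  · exact (integrable_exp_neg_mul_sq (by norm_num : (0:ℝ) < 1/6)).const_mul _
  · apply ae_of_all
    intro t
    have hc : Tendsto (fun r : ℝ => r * Real.sqrt r) atTop atTop :=
      tendsto_id.atTop_mul_atTop₀ sqrt_tendsto_atTop
    have hinv : Tendsto (fun r : ℝ => (r * Real.sqrt r)⁻¹) atTop (nhds 0) :=
      tendsto_inv_atTop_zero.comp hc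
    have htc : ∀ s : ℝ, Tendsto (fun r : ℝ => s / (r * Real.sqrt r)) atTop (nhds 0) := by
      intro s
      have := hinv.const_mul s
      rw [mul_zero] at this
      exact this.congr (fun r => by rw [div_eq_mul_inv])
    have hlim : Tendsto (fun r : ℝ => airyH r t) atTop (nhds (Real.exp (-t^2))) := by
      unfold airyH
      have h1 : Tendsto (fun r : ℝ => 1 + t / (r * Real.sqrt r)) atTop (nhds 1) := by
        have := (htc t).const_add 1
        rwa [add_zero] at this
      have h2 : Tendsto (fun r : ℝ => Real.sqrt (1 + t / (r * Real.sqrt r))) atTop (nhds 1) := by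
        have := (Real.continuous_sqrt.tendsto 1).comp h1
        simpa [Function.comp_def] using this
      have h3 : Tendsto (fun r : ℝ => -(t^2 + 2/3 * t^3 / (r * Real.sqrt r))) atTop
          (nhds (-t^2)) := by
        have h4 := (htc (2/3 * t^3)).const_add (t^2)
        rw [add_zero] at h4
        have h5 : ∀ r : ℝ, t^2 + 2/3 * t^3 / (r * Real.sqrt r)
            = t^2 + (2/3 * t^3) / (r * Real.sqrt r) := by
          intro r; ring_nf
        have := h4.neg
        apply this.congr
        intro r
        rw [h5 r]
      have h6 := (Real.continuous_exp.tendsto (-t^2)).comp h3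
      have := h2.mul h6
      rwa [one_mul] at this
    have hev : ∀ᶠ r : ℝ in atTop,
        Set.indicator (Set.Ioi (airyA A r)) (airyH r) t = airyH r t := by
      filter_upwards [eventually_ge_atTop (Real.sqrt A + 1),
        sqrt_tendsto_atTop.eventually_gt_atTop (-t)] with r h1 h2
      apply Set.indicator_of_mem
      show airyA A r < t
      unfold airyA
      have h3 : Real.sqrt A - r ≤ -1 := by linarith
      have h4 : 0 ≤ Real.sqrt r := Real.sqrt_nonneg r
      nlinarith
    exact hlim.congr' (hev.mono fun r h => h.symm)

/-- The main limit for the leading term. -/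
lemma airy_lead_limit (A : ℝ) (hA : 1 ≤ A) :
    Tendsto (fun r : ℝ =>
        Real.exp (-r^3/3) * ∫ z in Set.Ioi A, Real.exp (r * z) * airyLead z)
      atTop (nhds 1) := by
  have hπ : (0:ℝ) < Real.sqrt π := Real.sqrt_pos.2 Real.pi_pos
  have h1 := (airy_gauss A hA).const_mul (Real.sqrt π)⁻¹
  rw [inv_mul_cancel₀ hπ.ne'] at h1
  apply h1.congr'
  filter_upwards [eventually_ge_atTop (Real.sqrt A + 1)] with r hr
  exact (airy_subst A r hA hr).symm

/-- Integrability of the leading-term integrand. -/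
lemma airy_lead_contOn (r : ℝ) :
    ContinuousOn (fun z => Real.exp (r * z) * airyLead z) (Set.Ici (1:ℝ)) := by
  unfold airyLead
  apply ContinuousOn.mul (Continuous.continuousOn (by fun_prop))
  apply ContinuousOn.div
  · apply Real.continuous_exp.comp_continuousOn
    apply ContinuousOn.mul continuousOn_const
    apply ContinuousOn.rpow_const continuousOn_id
    intro x hx
    left
    exact ne_of_gt (lt_of_lt_of_le one_pos hx)
  · apply ContinuousOn.mul continuousOn_const
    apply ContinuousOn.rpow_const continuousOn_id
    intro x hx
    left
    exact ne_of_gt (lt_of_lt_of_le one_pos hx)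
  · intro x hx
    have hx0 : (0:ℝ) < x := lt_of_lt_of_le one_pos hx
    have h1 : (0:ℝ) < x ^ ((1:ℝ)/4) := Real.rpow_pos_of_pos hx0 _
    have h2 : (0:ℝ) < Real.sqrt π := Real.sqrt_pos.2 Real.pi_pos
    positivity

lemma airyLead_pos (z : ℝ) (hz : 0 < z) : 0 < airyLead z := by
  unfold airyLead
  have h1 : (0:ℝ) < z ^ ((1:ℝ)/4) := Real.rpow_pos_of_pos hz _
  have h2 : (0:ℝ) < Real.sqrt π := Real.sqrt_pos.2 Real.pi_pos
  positivity

/-- Integrability of the leading-term integrand. -/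
lemma airy_lead_integrable (A r : ℝ) (hA : 1 ≤ A) :
    IntegrableOn (fun z => Real.exp (r * z) * airyLead z) (Set.Ioi A) := by
  set B := max A (9 * (|r| + 1)^2) with hB
  have hAB : A ≤ B := le_max_left _ _
  have hB1 : 1 ≤ B := le_trans hA hAB
  rw [← Set.Ioc_union_Ioi_eq_Ioi hAB]
  apply IntegrableOn.union
  · -- compact piece
    have hsub : Set.Icc A B ⊆ Set.Ici (1:ℝ) := fun x hx => le_trans hA hx.1
    exact ((airy_lead_contOn r).mono hsub).integrableOn_Icc.mono_set Set.Ioc_subset_Icc_self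
  · -- tail piece
    have hmeas : AEStronglyMeasurable (fun z => Real.exp (r * z) * airyLead z)
        (volume.restrict (Set.Ioi B)) := by
      apply ContinuousOn.aestronglyMeasurable _ measurableSet_Ioi
      apply (airy_lead_contOn r).mono
      intro x hx
      exact le_of_lt (lt_of_le_of_lt hB1 hx)
    apply Integrable.mono (exp_neg_integrableOn_Ioi B one_pos) hmeas
    rw [ae_restrict_iff' measurableSet_Ioi]
    apply ae_of_all
    intro z hz
    have hzB : B < z := hz
    have hz1 : 1 < z := lt_of_le_of_lt hB1 hzB
    have hz0 : 0 < z := by linarith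
    have hsπ : 1 ≤ Real.sqrt π := by
      rw [show (1:ℝ) = Real.sqrt 1 by simp]
      exact Real.sqrt_le_sqrt (by linarith [Real.pi_gt_three])
    have hz14 : 1 ≤ z ^ ((1:ℝ)/4) := by
      calc (1:ℝ) = 1 ^ ((1:ℝ)/4) := (Real.one_rpow _).symm
      _ ≤ z ^ ((1:ℝ)/4) := Real.rpow_le_rpow zero_le_one hz1.le (by norm_num)
    have hden : 1 ≤ 2 * Real.sqrt π * z ^ ((1:ℝ)/4) := by nlinarith
    have h32 : z ^ ((3:ℝ)/2) = z * Real.sqrt z := by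
      rw [show ((3:ℝ)/2) = (1:ℝ) + 1/2 by norm_num, Real.rpow_add hz0, Real.rpow_one,
        Real.sqrt_eq_rpow]
    have hsz : 3 * (|r| + 1) ≤ Real.sqrt z := by
      have h1 : Real.sqrt (9 * (|r| + 1)^2) ≤ Real.sqrt z :=
        Real.sqrt_le_sqrt (by linarith [le_max_right A (9 * (|r| + 1)^2)])
      have h2 : Real.sqrt (9 * (|r| + 1)^2) = 3 * (|r| + 1) := by
        rw [show 9 * (|r| + 1)^2 = (3 * (|r| + 1))^2 by ring]
        exact Real.sqrt_sq (by positivity)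
      linarith
    have hexp : r * z + (-(2/3)) * z ^ ((3:ℝ)/2) ≤ -z := by
      rw [h32]
      have h1 : r * z ≤ |r| * z := mul_le_mul_of_nonneg_right (le_abs_self r) hz0.le
      have h2 : 2/3 * (z * (3 * (|r| + 1))) ≤ 2/3 * (z * Real.sqrt z) := by
        apply mul_le_mul_of_nonneg_left _ (by norm_num)
        exact mul_le_mul_of_nonneg_left hsz hz0.le
      have h3 : 0 ≤ |r| * z := mul_nonneg (abs_nonneg r) hz0.le
      nlinarith
    rw [Real.norm_eq_abs, Real.norm_eq_abs]
    have hlead := airyLead_pos z hz0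
    rw [abs_of_pos (by positivity), abs_of_pos (Real.exp_pos _)]
    unfold airyLead
    calc Real.exp (r * z) * (Real.exp (-(2/3) * z ^ ((3:ℝ)/2)) / (2 * Real.sqrt π * z ^ ((1:ℝ)/4)))
        ≤ Real.exp (r * z) * Real.exp (-(2/3) * z ^ ((3:ℝ)/2)) := by
          apply mul_le_mul_of_nonneg_left _ (Real.exp_pos _).le
          exact div_le_self (Real.exp_pos _).le hden
      _ = Real.exp (r * z + (-(2/3)) * z ^ ((3:ℝ)/2)) := by rw [Real.exp_add]
      _ ≤ Real.exp (-z) := Real.exp_le_exp.2 hexp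
      _ = Real.exp (-1 * z) := by norm_num

set_option maxHeartbeats 1000000 in
/-- Given the Airy asymptotic `Ai z ~ (2√π z^{1/4})⁻¹ e^{-(2/3) z^{3/2}}` as
`z → ∞`, together with continuity, boundedness and positivity of `Ai` on
`(γ₁, ∞)` where `γ₁ < 0` is the largest zero of `Ai`, we have
`lim_{r→∞} e^{-r³/3} ∫_{γ₁}^∞ e^{rz} Ai z dz = 1`. -/
theorem stmt_17 (Ai : ℝ → ℝ) (γ₁ : ℝ) (hγ : γ₁ < 0)
    (hcont : Continuous Ai) (hzero : Ai γ₁ = 0)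
    (hpos : ∀ z, γ₁ < z → 0 < Ai z)
    (hbdd : ∃ M : ℝ, ∀ z, |Ai z| ≤ M)
    (hasymp : Tendsto
      (fun z : ℝ => Ai z * (2 * Real.sqrt π * z ^ ((1:ℝ)/4)) *
        Real.exp ((2/3) * z ^ ((3:ℝ)/2))) atTop (nhds 1)) :
    Tendsto (fun r : ℝ =>
        Real.exp (-r^3/3) * ∫ z in Set.Ioi γ₁, Real.exp (r * z) * Ai z)
      atTop (nhds 1) := by
  obtain ⟨M, hM⟩ := hbdd
  have hM0 : 0 ≤ M := le_trans (abs_nonneg _) (hM 0)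
  rw [Metric.tendsto_nhds]
  intro ε₀ hε₀
  set ε := min (ε₀/8) (1/2) with hε
  have hε0 : 0 < ε := lt_min (by linarith) (by norm_num)
  have hε2 : ε ≤ 1/2 := min_le_right _ _
  have hε8 : ε ≤ ε₀/8 := min_le_left _ _
  have hratio : ∀ᶠ z in atTop,
      |Ai z * (2 * Real.sqrt π * z ^ ((1:ℝ)/4)) * Real.exp ((2/3) * z ^ ((3:ℝ)/2)) - 1|
        ≤ ε := by
    filter_upwards [Metric.tendsto_nhds.1 hasymp ε hε0] with z hz
    rw [Real.dist_eq] at hz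
    exact hz.le
  obtain ⟨A₁, hA₁⟩ := eventually_atTop.1 hratio
  set A := max A₁ 1 with hAdef
  have hA : (1:ℝ) ≤ A := le_max_right _ _
  have hγA : γ₁ < A := lt_of_lt_of_le (by linarith) hA
  have hAbnd : ∀ z, A ≤ z →
      |Ai z * (2 * Real.sqrt π * z ^ ((1:ℝ)/4)) * Real.exp ((2/3) * z ^ ((3:ℝ)/2)) - 1|
        ≤ ε := fun z hz => hA₁ z (le_trans (le_max_left _ _) hz)
  -- pointwise sandwich on [A, ∞)
  have hsand : ∀ z, A ≤ z →
      (1-ε) * airyLead z ≤ Ai z ∧ Ai z ≤ (1+ε) * airyLead z := by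
    intro z hz
    have hz0 : 0 < z := lt_of_lt_of_le one_pos (le_trans hA hz)
    have hl := airyLead_pos z hz0
    have hD1 : (0:ℝ) < Real.sqrt π := Real.sqrt_pos.2 Real.pi_pos
    have hD2 : (0:ℝ) < z ^ ((1:ℝ)/4) := Real.rpow_pos_of_pos hz0 _
    have hfe : Ai z
        = (Ai z * (2 * Real.sqrt π * z ^ ((1:ℝ)/4)) * Real.exp ((2/3) * z ^ ((3:ℝ)/2)))
          * airyLead z := by
      unfold airyLead
      rw [show -(2/3) * z^((3:ℝ)/2) = -((2/3) * z^((3:ℝ)/2)) by ring, Real.exp_neg]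
      have hE := Real.exp_pos ((2/3) * z^((3:ℝ)/2))
      field_simp
    obtain ⟨hlo, hhi⟩ := abs_le.1 (hAbnd z hz)
    constructor
    · rw [hfe]
      apply mul_le_mul_of_nonneg_right (by linarith) hl.le
    · rw [hfe]
      apply mul_le_mul_of_nonneg_right (by linarith) hl.le
  -- integrability
  have hint2 : ∀ r : ℝ, IntegrableOn (fun z => Real.exp (r * z) * Ai z) (Set.Ioi A) := by
    intro r
    have hmeas : AEStronglyMeasurable (fun z => Real.exp (r * z) * Ai z)
        (volume.restrict (Set.Ioi A)) :=
      (((Real.continuous_exp.comp (continuous_const.mul continuous_id)).mul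
        hcont).aestronglyMeasurable).restrict
    apply Integrable.mono ((airy_lead_integrable A r hA).const_mul 2) hmeas
    rw [ae_restrict_iff' measurableSet_Ioi]
    apply ae_of_all
    intro z hz
    have hz' : A ≤ z := le_of_lt hz
    obtain ⟨h1, h2⟩ := hsand z hz'
    have hz0 : (0:ℝ) < z := lt_of_lt_of_le one_pos (le_trans hA hz')
    have hAipos : 0 ≤ Ai z := (hpos z (lt_trans hγA hz)).le
    have hl := airyLead_pos z hz0
    rw [Real.norm_eq_abs, Real.norm_eq_abs,
      abs_of_nonneg (mul_nonneg (Real.exp_pos _).le hAipos),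
      abs_of_nonneg (by positivity)]
    have h3 : Ai z ≤ 2 * airyLead z := by nlinarith
    nlinarith [Real.exp_pos (r * z)]
  have hint1 : ∀ r : ℝ, IntegrableOn (fun z => Real.exp (r * z) * Ai z) (Set.Ioc γ₁ A) :=
    fun r => ((Real.continuous_exp.comp (continuous_const.mul continuous_id)).mul
      hcont).integrableOn_Ioc
  have hdisj : Disjoint (Set.Ioc γ₁ A) (Set.Ioi A) :=
    Set.disjoint_left.2 fun z hz1 hz2 => absurd hz1.2 (not_le.2 hz2)
  have hsplit : ∀ r : ℝ, (∫ z in Set.Ioi γ₁, Real.exp (r * z) * Ai z)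
      = (∫ z in Set.Ioc γ₁ A, Real.exp (r * z) * Ai z)
        + ∫ z in Set.Ioi A, Real.exp (r * z) * Ai z := by
    intro r
    rw [← Set.Ioc_union_Ioi_eq_Ioi hγA.le,
      setIntegral_union hdisj measurableSet_Ioi (hint1 r) (hint2 r)]
  -- tail tends to 0
  have hT : Tendsto (fun r : ℝ =>
      Real.exp (-r^3/3) * ∫ z in Set.Ioc γ₁ A, Real.exp (r * z) * Ai z)
      atTop (nhds 0) := by
    apply squeeze_zero_norm' (a := fun r : ℝ => (M * (A - γ₁)) * Real.exp (r * A - r^3/3))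
    · filter_upwards [eventually_ge_atTop (0:ℝ)] with r hr
      rw [Real.norm_eq_abs, abs_mul, abs_of_pos (Real.exp_pos _)]
      have hbound : ‖∫ z in Set.Ioc γ₁ A, Real.exp (r * z) * Ai z‖
          ≤ (M * Real.exp (r * A)) * (volume (Set.Ioc γ₁ A)).toReal := by
        apply norm_setIntegral_le_of_norm_le_const
        · rw [Real.volume_Ioc]; exact ENNReal.ofReal_lt_top
        · intro z hz
          rw [Real.norm_eq_abs, abs_mul, abs_of_pos (Real.exp_pos _)]
          have he : Real.exp (r * z) ≤ Real.exp (r * A) :=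
            Real.exp_le_exp.2 (mul_le_mul_of_nonneg_left hz.2 hr)
          calc Real.exp (r * z) * |Ai z| ≤ Real.exp (r * A) * M :=
                mul_le_mul he (hM z) (abs_nonneg _) (Real.exp_pos _).le
            _ = M * Real.exp (r * A) := mul_comm _ _
      rw [Real.volume_Ioc, ENNReal.toReal_ofReal (by linarith)] at hbound
      rw [Real.norm_eq_abs] at hbound
      calc Real.exp (-r^3/3) * |∫ z in Set.Ioc γ₁ A, Real.exp (r * z) * Ai z|
          ≤ Real.exp (-r^3/3) * ((M * Real.exp (r * A)) * (A - γ₁)) :=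
            mul_le_mul_of_nonneg_left hbound (Real.exp_pos _).le
        _ = (M * (A - γ₁)) * Real.exp (r * A - r^3/3) := by
            rw [show r * A - r^3/3 = -r^3/3 + r * A by ring, Real.exp_add]
            ring
    · have harg : Tendsto (fun r : ℝ => r * A - r^3/3) atTop atBot := by
        apply tendsto_atBot_mono' atTop _ tendsto_neg_atTop_atBot
        filter_upwards [eventually_ge_atTop (max 1 (3*A+3))] with r hr
        have h1 : 1 ≤ r := le_trans (le_max_left _ _) hr
        have h2 : 3*A+3 ≤ r := le_trans (le_max_right _ _) hr
        show r * A - r^3/3 ≤ -r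
        have h3 : r ≤ r^2 := by nlinarith
        have h4 : 3*A + 3 ≤ r^2 := by linarith
        have h5 : r * (3*A+3) ≤ r * r^2 := mul_le_mul_of_nonneg_left h4 (by linarith)
        have h6 : r * r^2 = r^3 := by ring
        nlinarith
      have := (Real.tendsto_exp_atBot.comp harg).const_mul (M * (A - γ₁))
      rwa [mul_zero] at this
  have hJ := airy_lead_limit A hA
  have hJev := Metric.tendsto_nhds.1 hJ ε hε0
  have hTev := Metric.tendsto_nhds.1 hT ε hε0
  filter_upwards [hJev, hTev] with r h1 h2
  rw [Real.dist_eq] at h1 h2 ⊢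
  rw [sub_zero] at h2
  have hJb := abs_lt.1 h1
  have hTb := abs_lt.1 h2
  -- sandwich for the main part
  have hSle : Real.exp (-r^3/3) * ∫ z in Set.Ioi A, Real.exp (r * z) * Ai z
      ≤ (1+ε) * (Real.exp (-r^3/3) * ∫ z in Set.Ioi A, Real.exp (r * z) * airyLead z) := by
    have hint : (∫ z in Set.Ioi A, Real.exp (r * z) * Ai z)
        ≤ ∫ z in Set.Ioi A, (1+ε) * (Real.exp (r * z) * airyLead z) := by
      apply setIntegral_mono_on (hint2 r) ((airy_lead_integrable A r hA).const_mul (1+ε))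
        measurableSet_Ioi
      intro z hz
      have h := (hsand z (le_of_lt hz)).2
      nlinarith [Real.exp_pos (r * z), (hsand z (le_of_lt hz)).2]
    rw [integral_const_mul] at hint
    calc Real.exp (-r^3/3) * ∫ z in Set.Ioi A, Real.exp (r * z) * Ai z
        ≤ Real.exp (-r^3/3) * ((1+ε) * ∫ z in Set.Ioi A, Real.exp (r * z) * airyLead z) :=
          mul_le_mul_of_nonneg_left hint (Real.exp_pos _).le
      _ = (1+ε) * (Real.exp (-r^3/3) * ∫ z in Set.Ioi A, Real.exp (r * z) * airyLead z) := by
          ring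
  have hSge : (1-ε) * (Real.exp (-r^3/3) * ∫ z in Set.Ioi A, Real.exp (r * z) * airyLead z)
      ≤ Real.exp (-r^3/3) * ∫ z in Set.Ioi A, Real.exp (r * z) * Ai z := by
    have hint : (∫ z in Set.Ioi A, (1-ε) * (Real.exp (r * z) * airyLead z))
        ≤ ∫ z in Set.Ioi A, Real.exp (r * z) * Ai z := by
      apply setIntegral_mono_on ((airy_lead_integrable A r hA).const_mul (1-ε)) (hint2 r)
        measurableSet_Ioi
      intro z hz
      nlinarith [Real.exp_pos (r * z), (hsand z (le_of_lt hz)).1]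
    rw [integral_const_mul] at hint
    calc (1-ε) * (Real.exp (-r^3/3) * ∫ z in Set.Ioi A, Real.exp (r * z) * airyLead z)
        = Real.exp (-r^3/3) * ((1-ε) * ∫ z in Set.Ioi A, Real.exp (r * z) * airyLead z) := by
          ring
      _ ≤ Real.exp (-r^3/3) * ∫ z in Set.Ioi A, Real.exp (r * z) * Ai z :=
          mul_le_mul_of_nonneg_left hint (Real.exp_pos _).le
  rw [hsplit r, mul_add]
  set T := Real.exp (-r^3/3) * ∫ z in Set.Ioc γ₁ A, Real.exp (r * z) * Ai z with hTdef
  set S := Real.exp (-r^3/3) * ∫ z in Set.Ioi A, Real.exp (r * z) * Ai z with hSdef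
  set J := Real.exp (-r^3/3) * ∫ z in Set.Ioi A, Real.exp (r * z) * airyLead z with hJdef
  have hub : (1+ε)*J ≤ (1+ε)*(1+ε) :=
    mul_le_mul_of_nonneg_left (by linarith [hJb.2]) (by linarith)
  have hlb : (1-ε)*(1-ε) ≤ (1-ε)*J :=
    mul_le_mul_of_nonneg_left (by linarith [hJb.1]) (by linarith)
  have e1 : (1+ε)*(1+ε) = 1 + 2*ε + ε*ε := by ring
  have e2 : (1-ε)*(1-ε) = 1 - 2*ε + ε*ε := by ring
  have hε2' : ε*ε ≤ ε := by nlinarith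
  have hεsq : 0 ≤ ε*ε := mul_self_nonneg ε
  have hS1 : |S - 1| ≤ 3*ε := by
    apply abs_le.2
    constructor
    · linarith [hSge]
    · linarith [hSle]
  have habs : |T + S - 1| ≤ |T| + |S - 1| := by
    rw [show T + S - 1 = T + (S - 1) by ring]
    exact abs_add_le _ _
  calc |T + S - 1| ≤ |T| + |S - 1| := habs
    _ < ε + 3*ε := by linarith [hTb.1, hTb.2, abs_lt.2 ⟨hTb.1, hTb.2⟩]
    _ ≤ ε₀/2 := by linarith
    _ < ε₀ := by linarith
end
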